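/- arXiv:1401.6785 — 6 statements merged into one kernel-verified Lean document; each statement's English description precedes it below -/
import Mathlib

section
/- Define H(0, s, m) = s and H(d+1, s, m) = s·(m·2^{H(d,s,m)})^{d+1} + H(d, s, m), and H′(d, s, m) = 4(d+1)(s+m+1)·H(d, s, m). Then for all natural numbers d, m ≥ 0 and s ≥ 1, H′(d+1, s, m) ≤ 2^{H′(d, s, m)}. -/
/-- `H 0 s m = s` and `H (d+1) s m = s * (m * 2 ^ H d s m) ^ (d+1) + H d s m`. -/
def H : ℕ → ℕ → ℕ → ℕ
  | 0, s, _ => s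
  | d + 1, s, m => s * (m * 2 ^ H d s m) ^ (d + 1) + H d s m

/-- `H' d s m = 4 * (d+1) * (s+m+1) * H d s m`. -/
def H' (d s m : ℕ) : ℕ := 4 * (d + 1) * (s + m + 1) * H d s m

lemma s_le_H (d s m : ℕ) : s ≤ H d s m := by
  induction d with
  | zero => simp [H]
  | succ d ih => exact ih.trans (Nat.le_add_left _ _)

/-- For all `d, m ≥ 0` and `s ≥ 1`, `H' (d+1) s m ≤ 2 ^ H' d s m`. -/
theorem H'_succ_le (d m s : ℕ) (hs : 1 ≤ s) :
    H' (d + 1) s m ≤ 2 ^ H' d s m := by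
  set h := H d s m with hh
  have hsh : s ≤ h := s_le_H d s m
  have h1 : 1 ≤ h := hs.trans hsh
  have e1 : 4 * (d + 1 + 1) ≤ 2 ^ (d + 3) := by
    have := (Nat.lt_two_pow_self (n := d + 1))
    calc 4 * (d + 1 + 1) ≤ 4 * 2 ^ (d + 1) := by omega
      _ = 2 ^ (d + 3) := by ring
  have e2 : s + m + 1 ≤ 2 ^ (s + m) := (Nat.lt_two_pow_self (n := s + m))
  have e3 : s ≤ 2 ^ (s - 1) := by
    have := (Nat.lt_two_pow_self (n := s - 1)); omega
  have e4 : m ^ (d + 1) ≤ 2 ^ (m * (d + 1)) := by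
    rw [pow_mul]
    exact Nat.pow_le_pow_left (Nat.le_of_lt ((Nat.lt_two_pow_self (n := m)))) _
  have e5 : h ≤ 2 ^ (h - 1) := by
    have := (Nat.lt_two_pow_self (n := h - 1)); omega
  have key : s * (m * 2 ^ h) ^ (d + 1) + h ≤ 2 ^ (s + m * (d + 1) + h * (d + 1)) := by
    have t1 : s * (m * 2 ^ h) ^ (d + 1)
        ≤ 2 ^ (s - 1) * (2 ^ (m * (d + 1)) * 2 ^ (h * (d + 1))) := by
      rw [mul_pow, ← pow_mul]
      exact Nat.mul_le_mul e3 (Nat.mul_le_mul e4 le_rfl)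
    have t2 : 2 ^ (s - 1) * (2 ^ (m * (d + 1)) * 2 ^ (h * (d + 1)))
        = 2 ^ (s - 1 + m * (d + 1) + h * (d + 1)) := by
      rw [← pow_add, ← pow_add]; ring_nf
    have t3 : h ≤ 2 ^ (s - 1 + m * (d + 1) + h * (d + 1)) := by
      calc h ≤ 2 ^ (h - 1) := e5
        _ ≤ 2 ^ (s - 1 + m * (d + 1) + h * (d + 1)) := by
          apply Nat.pow_le_pow_right (by norm_num)
          have : h ≤ h * (d + 1) := Nat.le_mul_of_pos_right h (by omega)
          omega
    calc s * (m * 2 ^ h) ^ (d + 1) + h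
        ≤ 2 ^ (s - 1 + m * (d + 1) + h * (d + 1)) + 2 ^ (s - 1 + m * (d + 1) + h * (d + 1)) :=
          Nat.add_le_add (t1.trans t2.le) t3
      _ = 2 ^ (s - 1 + m * (d + 1) + h * (d + 1) + 1) := by ring
      _ ≤ 2 ^ (s + m * (d + 1) + h * (d + 1)) := by
          apply Nat.pow_le_pow_right (by norm_num); omega
  have main : H' (d + 1) s m ≤ 2 ^ (d + 3 + (s + m) + (s + m * (d + 1) + h * (d + 1))) := by
    show 4 * (d + 1 + 1) * (s + m + 1) * H (d + 1) s m ≤ _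
    have hH : H (d + 1) s m = s * (m * 2 ^ h) ^ (d + 1) + h := rfl
    calc 4 * (d + 1 + 1) * (s + m + 1) * H (d + 1) s m
        ≤ 2 ^ (d + 3) * 2 ^ (s + m) * 2 ^ (s + m * (d + 1) + h * (d + 1)) := by
          rw [hH]; exact Nat.mul_le_mul (Nat.mul_le_mul e1 e2) key
      _ = 2 ^ (d + 3 + (s + m) + (s + m * (d + 1) + h * (d + 1))) := by
          rw [← pow_add, ← pow_add]
  refine main.trans (Nat.pow_le_pow_right (by norm_num) ?_)
  show d + 3 + (s + m) + (s + m * (d + 1) + h * (d + 1)) ≤ 4 * (d + 1) * (s + m + 1) * h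
  have p1 : d + 3 ≤ (d + 3) * h := Nat.le_mul_of_pos_right (d + 3) (by omega)
  have p2 : m ≤ m * h := Nat.le_mul_of_pos_right m (by omega)
  have p3 : m * (d + 1) ≤ m * (d + 1) * h := Nat.le_mul_of_pos_right _ (by omega)
  have A : d + 3 + (s + m) + (s + m * (d + 1) + h * (d + 1))
      ≤ h * (2 * d + 6 + m * (d + 2)) := by nlinarith [p1, p2, p3, hsh]
  have B : 2 * d + 6 + m * (d + 2) ≤ 4 * (d + 1) * (s + m + 1) := by
    have q : 4 * (d + 1) * (m + 2) ≤ 4 * (d + 1) * (s + m + 1) :=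
      Nat.mul_le_mul_left _ (by omega)
    nlinarith [q]
  calc d + 3 + (s + m) + (s + m * (d + 1) + h * (d + 1)) ≤ h * (2 * d + 6 + m * (d + 2)) := A
    _ ≤ h * (4 * (d + 1) * (s + m + 1)) := Nat.mul_le_mul_left _ B
    _ = 4 * (d + 1) * (s + m + 1) * h := by ring
end

section
/- If an ABVASS A = (Q, d, T_u, T_f, T_s, ∅) has a (q_r, v₀)-rooted Q_ℓ-leaf-covering deduction tree, then it has such a deduction tree of height at most H(d, |Q|, max⁻(T_u)). -/
/-- An alternating branching VASS with full zero tests (ABVASS₀):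
states `Q`, counters indexed by `ι`, with unary, fork, split, and
full-zero-test rules. -/
structure ABVASS (Q ι : Type) where
  Tu : Set (Q × (ι → ℤ) × Q)
  Tf : Set (Q × Q × Q)
  Ts : Set (Q × Q × Q)
  Tz : Set (Q × Q)

/-- Configurations: a state together with a vector of naturals. -/
abbrev Config (Q ι : Type) := Q × (ι → ℕ)

/-- Finite deduction trees labelled by configurations, with unary and
binary internal nodes. -/
inductive DTree (Q ι : Type) where
  | leaf : Config Q ι → DTree Q ι
  | node1 : Config Q ι → DTree Q ι → DTree Q ι
  | node2 : Config Q ι → DTree Q ι → DTree Q ι → DTree Q ι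

namespace DTree

variable {Q ι : Type}

/-- The root label of a deduction tree. -/
def root : DTree Q ι → Config Q ι
  | .leaf c => c
  | .node1 c _ => c
  | .node2 c _ _ => c

/-- Height: the maximum number of edges from the root to a leaf. -/
def height : DTree Q ι → ℕ
  | .leaf _ => 0
  | .node1 _ t => t.height + 1
  | .node2 _ t₁ t₂ => max t₁.height t₂.height + 1

/-- The list of leaf labels. -/
def leaves : DTree Q ι → List (Config Q ι)
  | .leaf c => [c]
  | .node1 _ t => t.leaves
  | .node2 _ t₁ t₂ => t₁.leaves ++ t₂.leaves

end DTree

variable {Q ι : Type}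

/-- Unary rule, applied top-down: from `(q, v)` derive `(q₁, v + u)`,
provided `v + u` is non-negative. -/
def UnaryStep (A : ABVASS Q ι) (c c' : Config Q ι) : Prop :=
  ∃ u, (c.1, u, c'.1) ∈ A.Tu ∧ ∀ i, (c'.2 i : ℤ) = (c.2 i : ℤ) + u i

/-- Full zero test: from `(q, 0)` derive `(q₁, 0)`. -/
def ZeroStep (A : ABVASS Q ι) (c c' : Config Q ι) : Prop :=
  (c.1, c'.1) ∈ A.Tz ∧ c.2 = (fun _ => 0) ∧ c'.2 = (fun _ => 0)

/-- Fork (children copy the parent's vector) or split (the parent's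
vector is a sum of the children's). -/
def BinStep (A : ABVASS Q ι) (c c₁ c₂ : Config Q ι) : Prop :=
  ((c.1, c₁.1, c₂.1) ∈ A.Tf ∧ c₁.2 = c.2 ∧ c₂.2 = c.2) ∨
  ((c.1, c₁.1, c₂.1) ∈ A.Ts ∧ c.2 = c₁.2 + c₂.2)

/-- A tree is a valid deduction tree when every internal node's children
are obtained by one of the permitted steps. -/
inductive ValidTree (step1 : Config Q ι → Config Q ι → Prop)
    (step2 : Config Q ι → Config Q ι → Config Q ι → Prop) : DTree Q ι → Prop
  | leaf (c : Config Q ι) : ValidTree step1 step2 (.leaf c)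
  | one {c : Config Q ι} {t : DTree Q ι} :
      step1 c t.root → ValidTree step1 step2 t → ValidTree step1 step2 (.node1 c t)
  | two {c : Config Q ι} {t₁ t₂ : DTree Q ι} :
      step2 c t₁.root t₂.root → ValidTree step1 step2 t₁ → ValidTree step1 step2 t₂ →
      ValidTree step1 step2 (.node2 c t₁ t₂)

/-- Deduction trees of an ABVASS₀ (standard semantics). -/
def IsDeduction (A : ABVASS Q ι) : DTree Q ι → Prop :=
  ValidTree (fun c c' => UnaryStep A c c' ∨ ZeroStep A c c') (BinStep A)

/-! ### Auxiliary development for the short-witness theorem -/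

section Aux

variable {Q ι : Type}

namespace DTree

/-- Number of nodes of a tree. -/
def size : DTree Q ι → ℕ
  | .leaf _ => 1
  | .node1 _ t => t.size + 1
  | .node2 _ t₁ t₂ => t₁.size + t₂.size + 1

/-- Relabel every node by applying `f` to its vector. -/
def mapVec (f : (ι → ℕ) → (ι → ℕ)) : DTree Q ι → DTree Q ι
  | .leaf c => .leaf (c.1, f c.2)
  | .node1 c t => .node1 (c.1, f c.2) (t.mapVec f)
  | .node2 c t₁ t₂ => .node2 (c.1, f c.2) (t₁.mapVec f) (t₂.mapVec f)

/-- Replace the root label. -/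
def setRoot (c : Config Q ι) : DTree Q ι → DTree Q ι
  | .leaf _ => .leaf c
  | .node1 _ t => .node1 c t
  | .node2 _ t₁ t₂ => .node2 c t₁ t₂

@[simp] lemma root_mapVec (f : (ι → ℕ) → (ι → ℕ)) (D : DTree Q ι) :
    (D.mapVec f).root = ((D.root).1, f (D.root).2) := by
  cases D <;> rfl

@[simp] lemma height_mapVec (f : (ι → ℕ) → (ι → ℕ)) (D : DTree Q ι) :
    (D.mapVec f).height = D.height := by
  induction D with
  | leaf c => rfl
  | node1 c t ih => simp [mapVec, height, ih]
  | node2 c t₁ t₂ ih₁ ih₂ => simp [mapVec, height, ih₁, ih₂]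

@[simp] lemma leaves_mapVec (f : (ι → ℕ) → (ι → ℕ)) (D : DTree Q ι) :
    (D.mapVec f).leaves = D.leaves.map (fun c => (c.1, f c.2)) := by
  induction D with
  | leaf c => rfl
  | node1 c t ih => simp [mapVec, leaves, ih]
  | node2 c t₁ t₂ ih₁ ih₂ => simp [mapVec, leaves, ih₁, ih₂]

@[simp] lemma root_setRoot (c : Config Q ι) (D : DTree Q ι) :
    (D.setRoot c).root = c := by cases D <;> rfl

@[simp] lemma height_setRoot (c : Config Q ι) (D : DTree Q ι) :
    (D.setRoot c).height = D.height := by cases D <;> rfl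

variable [DecidableEq (Config Q ι)]

/-- The finite set of all node labels. -/
def labels : DTree Q ι → Finset (Config Q ι)
  | .leaf c => {c}
  | .node1 c t => insert c t.labels
  | .node2 c t₁ t₂ => insert c (t₁.labels ∪ t₂.labels)

/-- Path-distinctness (strong form): each node's label does not occur in
any of its proper subtrees. -/
def PD : DTree Q ι → Prop
  | .leaf _ => True
  | .node1 c t => c ∉ t.labels ∧ t.PD
  | .node2 c t₁ t₂ => c ∉ t₁.labels ∧ c ∉ t₂.labels ∧ t₁.PD ∧ t₂.PD

lemma root_mem_labels (D : DTree Q ι) : D.root ∈ D.labels := by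
  cases D <;> simp [root, labels]

lemma labels_mapVec (f : (ι → ℕ) → (ι → ℕ)) (D : DTree Q ι) :
    (D.mapVec f).labels = D.labels.image (fun c => (c.1, f c.2)) := by
  induction D with
  | leaf c => rfl
  | node1 c t ih => simp [mapVec, labels, ih, Finset.image_insert]
  | node2 c t₁ t₂ ih₁ ih₂ =>
      simp [mapVec, labels, ih₁, ih₂, Finset.image_insert, Finset.image_union]

lemma height_lt_card_labels {D : DTree Q ι} (h : D.PD) :
    D.height + 1 ≤ D.labels.card := by
  induction D with
  | leaf c => simp [height, labels]
  | node1 c t ih =>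
      obtain ⟨hc, hpd⟩ := h
      have := ih hpd
      rw [labels, Finset.card_insert_of_notMem hc]
      simp only [height]; omega
  | node2 c t₁ t₂ ih₁ ih₂ =>
      obtain ⟨hc₁, hc₂, hp₁, hp₂⟩ := h
      have h₁ := ih₁ hp₁
      have h₂ := ih₂ hp₂
      have s₁ : t₁.labels.card ≤ (t₁.labels ∪ t₂.labels).card :=
        Finset.card_le_card Finset.subset_union_left
      have s₂ : t₂.labels.card ≤ (t₁.labels ∪ t₂.labels).card :=
        Finset.card_le_card Finset.subset_union_right
      have hc : c ∉ t₁.labels ∪ t₂.labels := by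
        simp only [Finset.mem_union]; tauto
      rw [labels, Finset.card_insert_of_notMem hc]
      simp only [height]; omega

end DTree

/-! ### Validity relative to a set of active coordinates -/

/-- Unary step checked only on coordinates in `S`. -/
def UnaryStepOn (A : ABVASS Q ι) (S : Finset ι) (c c' : Config Q ι) : Prop :=
  ∃ u, (c.1, u, c'.1) ∈ A.Tu ∧ ∀ i ∈ S, (c'.2 i : ℤ) = (c.2 i : ℤ) + u i

/-- Fork/split step checked only on coordinates in `S`. -/
def BinStepOn (A : ABVASS Q ι) (S : Finset ι) (c c₁ c₂ : Config Q ι) : Prop :=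
  ((c.1, c₁.1, c₂.1) ∈ A.Tf ∧ (∀ i ∈ S, c₁.2 i = c.2 i) ∧ (∀ i ∈ S, c₂.2 i = c.2 i)) ∨
  ((c.1, c₁.1, c₂.1) ∈ A.Ts ∧ ∀ i ∈ S, c.2 i = c₁.2 i + c₂.2 i)

def ValidOn (A : ABVASS Q ι) (S : Finset ι) : DTree Q ι → Prop :=
  ValidTree (UnaryStepOn A S) (BinStepOn A S)

lemma ValidTree.imp {s1 s1' : Config Q ι → Config Q ι → Prop}
    {s2 s2' : Config Q ι → Config Q ι → Config Q ι → Prop}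
    (h1 : ∀ c c', s1 c c' → s1' c c')
    (h2 : ∀ c c₁ c₂, s2 c c₁ c₂ → s2' c c₁ c₂) :
    ∀ {D : DTree Q ι}, ValidTree s1 s2 D → ValidTree s1' s2' D := by
  intro D h
  induction h with
  | leaf c => exact .leaf c
  | one hs _ ih => exact .one (h1 _ _ hs) ih
  | two hs _ _ ih₁ ih₂ => exact .two (h2 _ _ _ hs) ih₁ ih₂

lemma validOn_mono {A : ABVASS Q ι} {S S' : Finset ι} (hss : S' ⊆ S)
    {D : DTree Q ι} (h : ValidOn A S D) : ValidOn A S' D := by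
  refine ValidTree.imp ?_ ?_ h
  · rintro c c' ⟨u, hu, he⟩
    exact ⟨u, hu, fun i hi => he i (hss hi)⟩
  · rintro c c₁ c₂ (⟨h1, h2, h3⟩ | ⟨h1, h2⟩)
    · exact Or.inl ⟨h1, fun i hi => h2 i (hss hi), fun i hi => h3 i (hss hi)⟩
    · exact Or.inr ⟨h1, fun i hi => h2 i (hss hi)⟩

lemma validOn_mapVec {A : ABVASS Q ι} {S : Finset ι} {f : (ι → ℕ) → (ι → ℕ)}
    (hf : ∀ v k, k ∈ S → f v k = v k) :
    ∀ {D : DTree Q ι}, ValidOn A S D → ValidOn A S (D.mapVec f) := by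
  intro D h
  induction h with
  | leaf c => exact .leaf _
  | @one c t hs _ ih =>
      refine .one ?_ ih
      rw [DTree.root_mapVec]
      obtain ⟨u, hu, he⟩ := hs
      exact ⟨u, hu, fun i hi => by simp only [hf _ _ hi]; exact he i hi⟩
  | @two c t₁ t₂ hs _ _ ih₁ ih₂ =>
      refine .two ?_ ih₁ ih₂
      rw [DTree.root_mapVec, DTree.root_mapVec]
      rcases hs with ⟨h1, h2, h3⟩ | ⟨h1, h2⟩
      · exact Or.inl ⟨h1, fun i hi => by simp only [hf _ _ hi]; exact h2 i hi,
          fun i hi => by simp only [hf _ _ hi]; exact h3 i hi⟩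
      · exact Or.inr ⟨h1, fun i hi => by simp only [hf _ _ hi]; exact h2 i hi⟩

lemma validOn_setRoot {A : ABVASS Q ι} {S : Finset ι} {D : DTree Q ι}
    (h : ValidOn A S D) (c : Config Q ι)
    (h1 : c.1 = D.root.1) (h2 : ∀ k ∈ S, c.2 k = D.root.2 k) :
    ValidOn A S (D.setRoot c) := by
  cases D with
  | leaf c' => exact .leaf _
  | node1 c' t =>
      cases h with
      | one hs hv =>
          refine .one ?_ hv
          obtain ⟨u, hu, he⟩ := hs
          refine ⟨u, by rw [show c.1 = c'.1 from h1]; exact hu, fun i hi => ?_⟩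
          rw [show c.2 i = c'.2 i from h2 i hi]
          exact he i hi
  | node2 c' t₁ t₂ =>
      cases h with
      | two hs hv₁ hv₂ =>
          refine .two ?_ hv₁ hv₂
          rcases hs with ⟨ha, hb, hc⟩ | ⟨ha, hb⟩
          · exact Or.inl ⟨by rw [show c.1 = c'.1 from h1]; exact ha,
              fun i hi => by rw [show c.2 i = c'.2 i from h2 i hi]; exact hb i hi,
              fun i hi => by rw [show c.2 i = c'.2 i from h2 i hi]; exact hc i hi⟩
          · exact Or.inr ⟨by rw [show c.1 = c'.1 from h1]; exact ha,
              fun i hi => by rw [show c.2 i = c'.2 i from h2 i hi]; exact hb i hi⟩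

lemma leaves_setRoot_states {D : DTree Q ι} {c : Config Q ι} {Qℓ : Set Q}
    (h1 : c.1 = D.root.1) (hl : ∀ l ∈ D.leaves, l.1 ∈ Qℓ) :
    ∀ l ∈ (D.setRoot c).leaves, l.1 ∈ Qℓ := by
  cases D with
  | leaf c' =>
      intro l hm
      simp only [DTree.setRoot, DTree.leaves, List.mem_singleton] at hm
      subst hm
      rw [h1]
      exact hl c' (by simp [DTree.leaves])
  | node1 c' t => exact hl
  | node2 c' t₁ t₂ => exact hl

end Aux
section Aux2

variable {Q ι : Type}

open DTree

/-- Extract a subtree rooted at a given occurring label. -/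
lemma exists_subtree [DecidableEq (Config Q ι)] {A : ABVASS Q ι} {S : Finset ι}
    {Qℓ : Set Q} :
    ∀ (D : DTree Q ι), ValidOn A S D → (∀ l ∈ D.leaves, l.1 ∈ Qℓ) →
    ∀ c ∈ D.labels, ∃ t : DTree Q ι, t.root = c ∧ ValidOn A S t ∧ t.size ≤ D.size ∧
      t.labels ⊆ D.labels ∧ (∀ l ∈ t.leaves, l.1 ∈ Qℓ) := by
  intro D
  induction D with
  | leaf c' =>
      intro hv hl c hc
      simp only [labels, Finset.mem_singleton] at hc
      subst hc
      exact ⟨.leaf c, rfl, hv, le_rfl, Finset.Subset.refl _, hl⟩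
  | node1 c' t ih =>
      intro hv hl c hc
      simp only [labels, Finset.mem_insert] at hc
      rcases hc with rfl | hc
      · exact ⟨.node1 c t, rfl, hv, le_rfl, Finset.Subset.refl _, hl⟩
      · cases hv with
        | one hs hv' =>
            obtain ⟨t₀, h1, h2, h3, h4, h5⟩ := ih hv' hl c hc
            exact ⟨t₀, h1, h2, by simp only [size]; omega,
              h4.trans (by simp [labels, Finset.subset_insert]), h5⟩
  | node2 c' t₁ t₂ ih₁ ih₂ =>
      intro hv hl c hc
      have hl₁ : ∀ l ∈ t₁.leaves, l.1 ∈ Qℓ := fun l h =>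
        hl l (by simp [leaves, h])
      have hl₂ : ∀ l ∈ t₂.leaves, l.1 ∈ Qℓ := fun l h =>
        hl l (by simp [leaves, h])
      simp only [labels, Finset.mem_insert, Finset.mem_union] at hc
      rcases hc with rfl | hc | hc
      · exact ⟨.node2 c t₁ t₂, rfl, hv, le_rfl, Finset.Subset.refl _, hl⟩
      · cases hv with
        | two hs hv₁ hv₂ =>
            obtain ⟨t₀, h1, h2, h3, h4, h5⟩ := ih₁ hv₁ hl₁ c hc
            refine ⟨t₀, h1, h2, by simp only [size]; omega, ?_, h5⟩
            intro x hx
            simp only [labels, Finset.mem_insert, Finset.mem_union]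
            exact Or.inr (Or.inl (h4 hx))
      · cases hv with
        | two hs hv₁ hv₂ =>
            obtain ⟨t₀, h1, h2, h3, h4, h5⟩ := ih₂ hv₂ hl₂ c hc
            refine ⟨t₀, h1, h2, by simp only [size]; omega, ?_, h5⟩
            intro x hx
            simp only [labels, Finset.mem_insert, Finset.mem_union]
            exact Or.inr (Or.inr (h4 hx))

/-- Splicing: every valid tree can be replaced by a path-distinct valid tree
with the same root, whose labels are among the original labels. -/
lemma splice [DecidableEq (Config Q ι)] {A : ABVASS Q ι} {S : Finset ι}
    {Qℓ : Set Q} :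
    ∀ (n : ℕ) (D : DTree Q ι), D.size ≤ n → ValidOn A S D →
      (∀ l ∈ D.leaves, l.1 ∈ Qℓ) →
    ∃ D' : DTree Q ι, ValidOn A S D' ∧ D'.root = D.root ∧
      (∀ l ∈ D'.leaves, l.1 ∈ Qℓ) ∧ D'.labels ⊆ D.labels ∧ D'.PD := by
  intro n
  induction n with
  | zero =>
      intro D hsz
      cases D <;> simp [size] at hsz
  | succ n ih =>
      intro D hsz hv hl
      cases D with
      | leaf c =>
          exact ⟨.leaf c, .leaf c, rfl, hl, Finset.Subset.refl _, trivial⟩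
      | node1 c t =>
          cases hv with
          | one hs hv' =>
              have hlt : ∀ l ∈ t.leaves, l.1 ∈ Qℓ := hl
              by_cases hc : c ∈ t.labels
              · obtain ⟨t₀, h1, h2, h3, h4, h5⟩ := exists_subtree t hv' hlt c hc
                have hsz' : t₀.size ≤ n := by
                  simp only [size] at hsz; omega
                obtain ⟨D', hv'', hr, hl', hsub, hpd⟩ := ih t₀ hsz' h2 h5
                refine ⟨D', hv'', by rw [hr, h1]; rfl, hl', ?_, hpd⟩
                refine hsub.trans (h4.trans ?_)
                simp [labels, Finset.subset_insert]
              · have hsz' : t.size ≤ n := by simp only [size] at hsz; omega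
                obtain ⟨t', hv'', hr, hl', hsub, hpd⟩ := ih t hsz' hv' hlt
                refine ⟨.node1 c t', .one (by rw [hr]; exact hs) hv'',
                  rfl, hl', ?_, ?_⟩
                · intro x hx
                  simp only [labels, Finset.mem_insert] at hx ⊢
                  rcases hx with rfl | hx
                  · exact Or.inl rfl
                  · exact Or.inr (hsub hx)
                · exact ⟨fun hmem => hc (hsub hmem), hpd⟩
      | node2 c t₁ t₂ =>
          cases hv with
          | two hs hv₁ hv₂ =>
              have hl₁ : ∀ l ∈ t₁.leaves, l.1 ∈ Qℓ := fun l h =>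
                hl l (by simp [leaves, h])
              have hl₂ : ∀ l ∈ t₂.leaves, l.1 ∈ Qℓ := fun l h =>
                hl l (by simp [leaves, h])
              by_cases hc₁ : c ∈ t₁.labels
              · obtain ⟨t₀, h1, h2, h3, h4, h5⟩ := exists_subtree t₁ hv₁ hl₁ c hc₁
                have hsz' : t₀.size ≤ n := by simp only [size] at hsz; omega
                obtain ⟨D', hv'', hr, hl', hsub, hpd⟩ := ih t₀ hsz' h2 h5
                refine ⟨D', hv'', by rw [hr, h1]; rfl, hl', ?_, hpd⟩
                intro x hx
                simp only [labels, Finset.mem_insert, Finset.mem_union]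
                exact Or.inr (Or.inl (h4 (hsub hx)))
              · by_cases hc₂ : c ∈ t₂.labels
                · obtain ⟨t₀, h1, h2, h3, h4, h5⟩ := exists_subtree t₂ hv₂ hl₂ c hc₂
                  have hsz' : t₀.size ≤ n := by simp only [size] at hsz; omega
                  obtain ⟨D', hv'', hr, hl', hsub, hpd⟩ := ih t₀ hsz' h2 h5
                  refine ⟨D', hv'', by rw [hr, h1]; rfl, hl', ?_, hpd⟩
                  intro x hx
                  simp only [labels, Finset.mem_insert, Finset.mem_union]
                  exact Or.inr (Or.inr (h4 (hsub hx)))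
                · have hsz₁ : t₁.size ≤ n := by simp only [size] at hsz; omega
                  have hsz₂ : t₂.size ≤ n := by simp only [size] at hsz; omega
                  obtain ⟨t₁', hva, hra, hla, hsa, hpa⟩ := ih t₁ hsz₁ hv₁ hl₁
                  obtain ⟨t₂', hvb, hrb, hlb, hsb, hpb⟩ := ih t₂ hsz₂ hv₂ hl₂
                  refine ⟨.node2 c t₁' t₂',
                    .two (by rw [hra, hrb]; exact hs) hva hvb, rfl, ?_, ?_, ?_⟩
                  · intro l hm
                    simp only [leaves, List.mem_append] at hm
                    rcases hm with hm | hm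
                    · exact hla l hm
                    · exact hlb l hm
                  · intro x hx
                    simp only [labels, Finset.mem_insert, Finset.mem_union] at hx ⊢
                    rcases hx with rfl | hx | hx
                    · exact Or.inl rfl
                    · exact Or.inr (Or.inl (hsa hx))
                    · exact Or.inr (Or.inr (hsb hx))
                  · exact ⟨fun h => hc₁ (hsa h), fun h => hc₂ (hsb h), hpa, hpb⟩

end Aux2
section Aux3

variable {Q ι : Type} [DecidableEq ι]

open DTree

/-- Lifting: a tree valid on `S.erase i` whose root carries a sufficiently
large value on coordinate `i` can be lifted to a tree valid on `S`. -/
lemma lift_lemma {A : ABVASS Q ι} {S : Finset ι} {i : ι} (hi : i ∈ S) {m : ℕ}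
    (hm : ∀ q u q', (q, u, q') ∈ A.Tu → ∀ k, -(m : ℤ) ≤ u k) :
    ∀ (D : DTree Q ι), ValidOn A (S.erase i) D →
    ∀ a : ℕ, m * 2 ^ D.height ≤ a →
    ∃ E : DTree Q ι, ValidOn A S E ∧
      E.root = ((D.root).1, Function.update (D.root).2 i a) ∧
      E.height = D.height ∧
      E.leaves.map Prod.fst = D.leaves.map Prod.fst := by
  intro D
  induction D with
  | leaf c =>
      intro _ a _
      exact ⟨.leaf (c.1, Function.update c.2 i a), .leaf _, rfl, rfl, rfl⟩
  | node1 c t ih =>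
      intro hv a ha
      cases hv with
      | one hs hv' =>
          obtain ⟨u, hu, he⟩ := hs
          have hui : -(m : ℤ) ≤ u i := hm _ _ _ hu i
          have hmle : (m : ℤ) * 2 ^ t.height ≤ ((m : ℤ) * 2 ^ (t.height + 1)) - m := by
            have h1 : (1 : ℤ) ≤ 2 ^ t.height := by exact_mod_cast Nat.one_le_two_pow
            have : (m : ℤ) * 2 ^ (t.height + 1) = (m : ℤ) * 2 ^ t.height + (m : ℤ) * 2 ^ t.height := by
              ring
            rw [this]
            nlinarith [Int.ofNat_nonneg m]
          have ha' : (m : ℤ) * 2 ^ (t.height + 1) ≤ (a : ℤ) := by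
            have := ha
            simp only [height] at this
            exact_mod_cast this
          have hnn : (0 : ℤ) ≤ (a : ℤ) + u i := by
            have h1 : (1 : ℤ) ≤ 2 ^ (t.height + 1) := by exact_mod_cast Nat.one_le_two_pow
            nlinarith [Int.ofNat_nonneg m]
          set b : ℕ := ((a : ℤ) + u i).toNat with hb
          have hbz : (b : ℤ) = (a : ℤ) + u i := Int.toNat_of_nonneg hnn
          have hble : m * 2 ^ t.height ≤ b := by
            have : (m : ℤ) * 2 ^ t.height ≤ (b : ℤ) := by
              rw [hbz]; linarith
            exact_mod_cast this
          obtain ⟨E, hvE, hrE, hhE, hlE⟩ := ih hv' b hble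
          refine ⟨.node1 (c.1, Function.update c.2 i a) E, ?_, rfl, ?_, hlE⟩
          · refine .one ?_ hvE
            rw [hrE]
            refine ⟨u, hu, fun k hk => ?_⟩
            by_cases hki : k = i
            · subst hki
              simp only [Function.update_self]
              exact hbz
            · simp only [Function.update_of_ne hki]
              exact he k (Finset.mem_erase.mpr ⟨hki, hk⟩)
          · simp only [height, hhE]
  | node2 c t₁ t₂ ih₁ ih₂ =>
      intro hv a ha
      cases hv with
      | two hs hv₁ hv₂ =>
          have hmax₁ : t₁.height ≤ max t₁.height t₂.height := le_max_left _ _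
          have hmax₂ : t₂.height ≤ max t₁.height t₂.height := le_max_right _ _
          rcases hs with ⟨h1, h2, h3⟩ | ⟨h1, h2⟩
          · -- fork: both children get a
            have ha₁ : m * 2 ^ t₁.height ≤ a :=
              le_trans (Nat.mul_le_mul_left m (Nat.pow_le_pow_right (by norm_num)
                (le_trans hmax₁ (Nat.le_succ _)))) ha
            have ha₂ : m * 2 ^ t₂.height ≤ a :=
              le_trans (Nat.mul_le_mul_left m (Nat.pow_le_pow_right (by norm_num)
                (le_trans hmax₂ (Nat.le_succ _)))) ha
            obtain ⟨E₁, hvE₁, hrE₁, hhE₁, hlE₁⟩ := ih₁ hv₁ a ha₁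
            obtain ⟨E₂, hvE₂, hrE₂, hhE₂, hlE₂⟩ := ih₂ hv₂ a ha₂
            refine ⟨.node2 (c.1, Function.update c.2 i a) E₁ E₂, ?_, rfl, ?_, ?_⟩
            · refine .two ?_ hvE₁ hvE₂
              rw [hrE₁, hrE₂]
              refine Or.inl ⟨h1, fun k hk => ?_, fun k hk => ?_⟩
              · by_cases hki : k = i
                · subst hki; simp
                · simp only [Function.update_of_ne hki]
                  exact h2 k (Finset.mem_erase.mpr ⟨hki, hk⟩)
              · by_cases hki : k = i
                · subst hki; simp
                · simp only [Function.update_of_ne hki]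
                  exact h3 k (Finset.mem_erase.mpr ⟨hki, hk⟩)
            · simp only [height, hhE₁, hhE₂]
            · simp only [leaves, hlE₁, hlE₂, List.map_append]
          · -- split
            set a₂ : ℕ := m * 2 ^ t₂.height with ha₂def
            have ha₂le : a₂ ≤ a := by
              refine le_trans ?_ ha
              exact Nat.mul_le_mul_left m (Nat.pow_le_pow_right (by norm_num)
                (le_trans hmax₂ (Nat.le_succ _)))
            set a₁ : ℕ := a - a₂ with ha₁def
            have hsum : a₁ + a₂ = a := Nat.sub_add_cancel ha₂le
            have ha₁ : m * 2 ^ t₁.height ≤ a₁ := by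
              have key : m * 2 ^ t₁.height + a₂ ≤ a := by
                refine le_trans ?_ ha
                have e1 : m * 2 ^ t₁.height ≤ m * 2 ^ (max t₁.height t₂.height) :=
                  Nat.mul_le_mul_left m (Nat.pow_le_pow_right (by norm_num) hmax₁)
                have e2 : a₂ ≤ m * 2 ^ (max t₁.height t₂.height) :=
                  Nat.mul_le_mul_left m (Nat.pow_le_pow_right (by norm_num) hmax₂)
                have e3 : m * 2 ^ (max t₁.height t₂.height + 1) =
                    m * 2 ^ (max t₁.height t₂.height) + m * 2 ^ (max t₁.height t₂.height) := by
                  ring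
                simp only [height]
                omega
              omega
            obtain ⟨E₁, hvE₁, hrE₁, hhE₁, hlE₁⟩ := ih₁ hv₁ a₁ ha₁
            obtain ⟨E₂, hvE₂, hrE₂, hhE₂, hlE₂⟩ := ih₂ hv₂ a₂ le_rfl
            refine ⟨.node2 (c.1, Function.update c.2 i a) E₁ E₂, ?_, rfl, ?_, ?_⟩
            · refine .two ?_ hvE₁ hvE₂
              rw [hrE₁, hrE₂]
              refine Or.inr ⟨h1, fun k hk => ?_⟩
              by_cases hki : k = i
              · subst hki; simp [hsum]
              · simp only [Function.update_of_ne hki]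
                exact h2 k (Finset.mem_erase.mpr ⟨hki, hk⟩)
            · simp only [height, hhE₁, hhE₂]
            · simp only [leaves, hlE₁, hlE₂, List.map_append]

end Aux3
section Aux4

variable {Q ι : Type}

open DTree

lemma leaf_states_transfer {E D : DTree Q ι} {Qℓ : Set Q}
    (h : E.leaves.map Prod.fst = D.leaves.map Prod.fst)
    (hl : ∀ l ∈ D.leaves, l.1 ∈ Qℓ) : ∀ l ∈ E.leaves, l.1 ∈ Qℓ := by
  intro l hml
  have hmem : l.1 ∈ E.leaves.map Prod.fst := List.mem_map_of_mem hml
  rw [h] at hmem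
  obtain ⟨l', hl', he⟩ := List.mem_map.mp hmem
  rw [← he]; exact hl l' hl'

/-- Counting: normalized small configurations are few. -/
lemma card_small_le [Fintype Q] [DecidableEq ι] {S : Finset ι} (hS : S.Nonempty)
    (B : ℕ) (L : Finset (Config Q ι))
    (hnorm : ∀ c ∈ L, ∀ k, k ∉ S → c.2 k = 0)
    (hsmall : ∀ c ∈ L, ∀ k ∈ S, c.2 k < B) :
    L.card ≤ Fintype.card Q * B ^ S.card := by
  classical
  rcases Nat.eq_zero_or_pos B with rfl | hB
  · have hL : L = ∅ := by
      rw [Finset.eq_empty_iff_forall_notMem]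
      intro c hc
      obtain ⟨k, hk⟩ := hS
      exact absurd (hsmall c hc k hk) (by omega)
    simp [hL]
  · set f : Config Q ι → Q × (↥S → Fin B) :=
      fun c => (c.1, fun k => ⟨c.2 k % B, Nat.mod_lt _ hB⟩) with hf
    have hcard := Finset.card_le_card_of_injOn (s := L) f
      (t := (Finset.univ : Finset (Q × (↥S → Fin B))))
      (fun a _ => Finset.mem_univ _) ?_
    · calc L.card ≤ (Finset.univ : Finset (Q × (↥S → Fin B))).card := hcard
        _ = Fintype.card Q * B ^ S.card := by
          rw [Finset.card_univ, Fintype.card_prod, Fintype.card_fun,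
            Fintype.card_fin, Fintype.card_coe]
    · intro c₁ h₁ c₂ h₂ hfe
      simp only [Finset.mem_coe] at h₁ h₂
      rw [hf] at hfe
      simp only [Prod.mk.injEq] at hfe
      obtain ⟨hq, hfe2⟩ := hfe
      have hv : c₁.2 = c₂.2 := by
        funext k
        by_cases hk : k ∈ S
        · have := congrFun hfe2 ⟨k, hk⟩
          have hval : c₁.2 k % B = c₂.2 k % B := congrArg Fin.val this
          rwa [Nat.mod_eq_of_lt (hsmall c₁ h₁ k hk),
            Nat.mod_eq_of_lt (hsmall c₂ h₂ k hk)] at hval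
        · rw [hnorm c₁ h₁ k hk, hnorm c₂ h₂ k hk]
      exact Prod.ext hq hv

/-- The key shortening step: given short witnesses for all smaller coordinate
sets, a path-distinct witness can be shortened. -/
lemma shorten [Fintype Q] [DecidableEq ι] [DecidableEq (Config Q ι)]
    {A : ABVASS Q ι} {m : ℕ}
    (hm : ∀ q u q', (q, u, q') ∈ A.Tu → ∀ k, -(m : ℤ) ≤ u k)
    {Qℓ : Set Q} {S : Finset ι} {n : ℕ}
    (IH : ∀ i ∈ S, ∀ D : DTree Q ι, ValidOn A (S.erase i) D →
        (∀ l ∈ D.leaves, l.1 ∈ Qℓ) →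
        ∃ D', ValidOn A (S.erase i) D' ∧ D'.root = D.root ∧
          (∀ l ∈ D'.leaves, l.1 ∈ Qℓ) ∧ D'.height ≤ H n (Fintype.card Q) m) :
    ∀ D : DTree Q ι, ValidOn A S D → (∀ l ∈ D.leaves, l.1 ∈ Qℓ) → D.PD →
    ∃ D', ValidOn A S D' ∧ D'.root = D.root ∧ (∀ l ∈ D'.leaves, l.1 ∈ Qℓ) ∧
      D'.height ≤ (D.labels.filter
          (fun c => ∀ k ∈ S, c.2 k < m * 2 ^ H n (Fintype.card Q) m)).card
        + H n (Fintype.card Q) m := by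
  set B : ℕ := m * 2 ^ H n (Fintype.card Q) m with hB
  have big : ∀ D : DTree Q ι, ValidOn A S D → (∀ l ∈ D.leaves, l.1 ∈ Qℓ) →
      ∀ i ∈ S, B ≤ D.root.2 i →
      ∃ D', ValidOn A S D' ∧ D'.root = D.root ∧ (∀ l ∈ D'.leaves, l.1 ∈ Qℓ) ∧
        D'.height ≤ H n (Fintype.card Q) m := by
    intro D hv hl i hi hbig
    obtain ⟨D'', hv'', hr'', hl'', hh''⟩ :=
      IH i hi D (validOn_mono (Finset.erase_subset _ _) hv) hl
    have hle : m * 2 ^ D''.height ≤ D.root.2 i :=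
      le_trans (Nat.mul_le_mul_left m (Nat.pow_le_pow_right (by norm_num) hh'')) hbig
    obtain ⟨E, hvE, hrE, hhE, hlE⟩ :=
      lift_lemma hi hm D'' hv'' (D.root.2 i) hle
    refine ⟨E, hvE, ?_, leaf_states_transfer hlE hl'', by rw [hhE]; exact hh''⟩
    rw [hrE, hr'', Function.update_eq_self]
  intro D
  induction D with
  | leaf c =>
      intro hv hl _
      exact ⟨.leaf c, hv, rfl, hl, Nat.le_add_left 0 _ |>.trans (Nat.le_add_left _ _) |>.trans le_rfl |>.trans le_rfl |>.trans (le_refl _) |>.trans (le_refl _)⟩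
  | node1 c t ih =>
      intro hv hl hpd
      by_cases hsmall : ∀ k ∈ S, c.2 k < B
      · obtain ⟨hc, hpdt⟩ := hpd
        cases hv with
        | one hs hv' =>
            obtain ⟨t', hvt, hrt, hlt, hht⟩ := ih hv' hl hpdt
            refine ⟨.node1 c t', .one (by rw [hrt]; exact hs) hvt, rfl, hlt, ?_⟩
            have hmemc : c ∈ (DTree.node1 c t).labels.filter
                (fun c => ∀ k ∈ S, c.2 k < B) := by
              rw [Finset.mem_filter]
              exact ⟨by simp [labels], hsmall⟩
            have hsubt : t.labels.filter (fun c => ∀ k ∈ S, c.2 k < B) ⊆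
                (DTree.node1 c t).labels.filter (fun c => ∀ k ∈ S, c.2 k < B) :=
              Finset.filter_subset_filter _ (by simp [labels, Finset.subset_insert])
            have hnotc : c ∉ t.labels.filter (fun c => ∀ k ∈ S, c.2 k < B) :=
              fun h => hc (Finset.mem_filter.mp h).1
            have hcard : (t.labels.filter (fun c => ∀ k ∈ S, c.2 k < B)).card + 1 ≤
                ((DTree.node1 c t).labels.filter (fun c => ∀ k ∈ S, c.2 k < B)).card := by
              rw [← Finset.card_insert_of_notMem hnotc]
              exact Finset.card_le_card (Finset.insert_subset hmemc hsubt)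
            simp only [height]
            omega
      · push_neg at hsmall
        obtain ⟨i, hi, hbig⟩ := hsmall
        obtain ⟨D', h1, h2, h3, h4⟩ := big _ hv hl i hi hbig
        exact ⟨D', h1, h2, h3, le_trans h4 (Nat.le_add_left _ _)⟩
  | node2 c t₁ t₂ ih₁ ih₂ =>
      intro hv hl hpd
      by_cases hsmall : ∀ k ∈ S, c.2 k < B
      · obtain ⟨hc₁, hc₂, hpd₁, hpd₂⟩ := hpd
        cases hv with
        | two hs hv₁ hv₂ =>
            have hl₁ : ∀ l ∈ t₁.leaves, l.1 ∈ Qℓ := fun l h =>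
              hl l (by simp [leaves, h])
            have hl₂ : ∀ l ∈ t₂.leaves, l.1 ∈ Qℓ := fun l h =>
              hl l (by simp [leaves, h])
            obtain ⟨t₁', hva, hra, hla, hha⟩ := ih₁ hv₁ hl₁ hpd₁
            obtain ⟨t₂', hvb, hrb, hlb, hhb⟩ := ih₂ hv₂ hl₂ hpd₂
            refine ⟨.node2 c t₁' t₂', .two (by rw [hra, hrb]; exact hs) hva hvb,
              rfl, ?_, ?_⟩
            · intro l hm'
              simp only [leaves, List.mem_append] at hm'
              rcases hm' with hm' | hm'
              · exact hla l hm'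
              · exact hlb l hm'
            · have hmemc : c ∈ (DTree.node2 c t₁ t₂).labels.filter
                  (fun c => ∀ k ∈ S, c.2 k < B) := by
                rw [Finset.mem_filter]
                exact ⟨by simp [labels], hsmall⟩
              have hsub₁ : t₁.labels.filter (fun c => ∀ k ∈ S, c.2 k < B) ⊆
                  (DTree.node2 c t₁ t₂).labels.filter (fun c => ∀ k ∈ S, c.2 k < B) := by
                refine Finset.filter_subset_filter _ ?_
                intro x hx
                simp only [labels, Finset.mem_insert, Finset.mem_union]
                exact Or.inr (Or.inl hx)
              have hsub₂ : t₂.labels.filter (fun c => ∀ k ∈ S, c.2 k < B) ⊆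
                  (DTree.node2 c t₁ t₂).labels.filter (fun c => ∀ k ∈ S, c.2 k < B) := by
                refine Finset.filter_subset_filter _ ?_
                intro x hx
                simp only [labels, Finset.mem_insert, Finset.mem_union]
                exact Or.inr (Or.inr hx)
              have hnotc₁ : c ∉ t₁.labels.filter (fun c => ∀ k ∈ S, c.2 k < B) :=
                fun h => hc₁ (Finset.mem_filter.mp h).1
              have hnotc₂ : c ∉ t₂.labels.filter (fun c => ∀ k ∈ S, c.2 k < B) :=
                fun h => hc₂ (Finset.mem_filter.mp h).1
              have hcard₁ : (t₁.labels.filter (fun c => ∀ k ∈ S, c.2 k < B)).card + 1 ≤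
                  ((DTree.node2 c t₁ t₂).labels.filter (fun c => ∀ k ∈ S, c.2 k < B)).card := by
                rw [← Finset.card_insert_of_notMem hnotc₁]
                exact Finset.card_le_card (Finset.insert_subset hmemc hsub₁)
              have hcard₂ : (t₂.labels.filter (fun c => ∀ k ∈ S, c.2 k < B)).card + 1 ≤
                  ((DTree.node2 c t₁ t₂).labels.filter (fun c => ∀ k ∈ S, c.2 k < B)).card := by
                rw [← Finset.card_insert_of_notMem hnotc₂]
                exact Finset.card_le_card (Finset.insert_subset hmemc hsub₂)
              simp only [height]
              omega
      · push_neg at hsmall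
        obtain ⟨i, hi, hbig⟩ := hsmall
        obtain ⟨D', h1, h2, h3, h4⟩ := big _ hv hl i hi hbig
        exact ⟨D', h1, h2, h3, le_trans h4 (Nat.le_add_left _ _)⟩

end Aux4
section Aux5

variable {Q ι : Type}

open DTree

lemma main_lemma [Fintype Q] [DecidableEq ι] {A : ABVASS Q ι} {m : ℕ}
    (hm : ∀ q u q', (q, u, q') ∈ A.Tu → ∀ k, -(m : ℤ) ≤ u k) (Qℓ : Set Q) :
    ∀ (n : ℕ) (S : Finset ι), S.card = n →
    ∀ D : DTree Q ι, ValidOn A S D → (∀ l ∈ D.leaves, l.1 ∈ Qℓ) →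
    ∃ D', ValidOn A S D' ∧ D'.root = D.root ∧ (∀ l ∈ D'.leaves, l.1 ∈ Qℓ) ∧
      D'.height ≤ H n (Fintype.card Q) m := by
  letI : DecidableEq (Config Q ι) := Classical.decEq _
  intro n
  induction n using Nat.strong_induction_on with
  | _ n IHn =>
  intro S hScard D hv hl
  -- normalize: zero out the coordinates outside S
  set f : (ι → ℕ) → (ι → ℕ) := fun v k => if k ∈ S then v k else 0 with hfdef
  have hfS : ∀ v k, k ∈ S → f v k = v k := fun v k hk => if_pos hk
  have hv₀ : ValidOn A S (D.mapVec f) := validOn_mapVec hfS hv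
  have hl₀ : ∀ l ∈ (D.mapVec f).leaves, l.1 ∈ Qℓ := by
    rw [DTree.leaves_mapVec]
    intro l hml
    obtain ⟨l', h1, h2⟩ := List.mem_map.mp hml
    rw [← h2]; exact hl l' h1
  obtain ⟨D₁, hv₁, hr₁, hl₁, hsub₁, hpd₁⟩ :=
    splice (Qℓ := Qℓ) (D.mapVec f).size (D.mapVec f) le_rfl hv₀ hl₀
  have hr₁' : D₁.root = (D.root.1, f D.root.2) := by
    rw [hr₁, DTree.root_mapVec]
  have hroot1 : (D.root).1 = D₁.root.1 := by rw [hr₁']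
  have hroot2 : ∀ k ∈ S, (D.root).2 k = D₁.root.2 k := by
    intro k hk
    rw [hr₁']
    exact (hfS _ k hk).symm
  have hlabels_norm : ∀ c ∈ D₁.labels, ∀ k, k ∉ S → c.2 k = 0 := by
    intro c hc k hk
    have hc' := hsub₁ hc
    rw [DTree.labels_mapVec] at hc'
    obtain ⟨c', _, h2⟩ := Finset.mem_image.mp hc'
    rw [← h2]
    exact if_neg hk
  cases n with
  | zero =>
      have hS : S = ∅ := Finset.card_eq_zero.mp hScard
      have hzero : ∀ v, f v = fun _ => 0 := by
        intro v; funext k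
        exact if_neg (by simp [hS])
      have hcard : D₁.labels.card ≤ Fintype.card Q := by
        have hsub : D₁.labels ⊆ Finset.univ.image (fun q : Q => (q, fun _ => 0)) := by
          intro c hc
          have hc' := hsub₁ hc
          rw [DTree.labels_mapVec] at hc'
          obtain ⟨c', _, h2⟩ := Finset.mem_image.mp hc'
          rw [Finset.mem_image]
          exact ⟨c'.1, Finset.mem_univ _, by rw [← h2, hzero]⟩
        calc D₁.labels.card ≤ _ := Finset.card_le_card hsub
          _ ≤ Finset.univ.card := Finset.card_image_le
          _ = Fintype.card Q := Finset.card_univ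
      have hht := height_lt_card_labels hpd₁
      refine ⟨D₁.setRoot D.root, validOn_setRoot hv₁ D.root hroot1 hroot2, by simp,
        leaves_setRoot_states hroot1 hl₁, ?_⟩
      · rw [DTree.height_setRoot]
        show D₁.height ≤ H 0 (Fintype.card Q) m
        simp only [H]
        omega
  | succ n' =>
      have hIH : ∀ i ∈ S, ∀ D : DTree Q ι, ValidOn A (S.erase i) D →
          (∀ l ∈ D.leaves, l.1 ∈ Qℓ) →
          ∃ D', ValidOn A (S.erase i) D' ∧ D'.root = D.root ∧
            (∀ l ∈ D'.leaves, l.1 ∈ Qℓ) ∧ D'.height ≤ H n' (Fintype.card Q) m := by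
        intro i hi
        exact IHn n' (Nat.lt_succ_self n') (S.erase i)
          (by rw [Finset.card_erase_of_mem hi, hScard]; rfl)
      obtain ⟨D₂, hv₂, hr₂, hl₂, hh₂⟩ := shorten hm hIH D₁ hv₁ hl₁ hpd₁
      have hSne : S.Nonempty := Finset.card_pos.mp (by omega)
      set B : ℕ := m * 2 ^ H n' (Fintype.card Q) m with hB
      have hcount : (D₁.labels.filter (fun c => ∀ k ∈ S, c.2 k < B)).card ≤
          Fintype.card Q * B ^ S.card := by
        refine card_small_le hSne B _ ?_ ?_
        · intro c hc k hk
          exact hlabels_norm c (Finset.mem_filter.mp hc).1 k hk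
        · intro c hc k hk
          exact (Finset.mem_filter.mp hc).2 k hk
      refine ⟨D₂.setRoot D.root, ?_, by simp, ?_, ?_⟩
      · refine validOn_setRoot hv₂ D.root ?_ ?_
        · rw [hr₂]; exact hroot1
        · intro k hk; rw [hr₂]; exact hroot2 k hk
      · exact leaves_setRoot_states (by rw [hr₂]; exact hroot1) hl₂
      · rw [DTree.height_setRoot]
        calc D₂.height ≤ _ + H n' (Fintype.card Q) m := hh₂
          _ ≤ Fintype.card Q * B ^ S.card + H n' (Fintype.card Q) m := by omega
          _ = H (n' + 1) (Fintype.card Q) m := by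
            rw [hScard]
            simp only [H, hB]

end Aux5

/-- If an ABVASS (no full zero tests) has a `(q_r, v₀)`-rooted
`Q_ℓ`-leaf-covering deduction tree, then it has such a deduction tree of
height at most `H d |Q| (max⁻ T_u)`. -/
theorem abvass_short_witness {Q : Type} [Fintype Q] {d : ℕ}
    (A : ABVASS Q (Fin d)) (hz : A.Tz = ∅) (hfin : A.Tu.Finite)
    (qr : Q) (v₀ : Fin d → ℕ) (Qℓ : Set Q)
    (hex : ∃ D : DTree Q (Fin d), IsDeduction A D ∧ D.root = (qr, v₀) ∧
      ∀ l ∈ D.leaves, l.1 ∈ Qℓ) :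
    ∃ D : DTree Q (Fin d), IsDeduction A D ∧ D.root = (qr, v₀) ∧
      (∀ l ∈ D.leaves, l.1 ∈ Qℓ) ∧
      D.height ≤ H d (Fintype.card Q)
        (hfin.toFinset.sup fun r => Finset.univ.sup fun i => (-(r.2.1 i)).toNat) := by
  classical
  obtain ⟨D, hded, hroot, hl⟩ := hex
  set m := hfin.toFinset.sup fun r => Finset.univ.sup fun i => (-(r.2.1 i)).toNat with hmdef
  have hm : ∀ q u q', (q, u, q') ∈ A.Tu → ∀ k, -(m : ℤ) ≤ u k := by
    intro q u q' hu k
    have h1 : (q, u, q') ∈ hfin.toFinset := hfin.mem_toFinset.mpr hu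
    have h2 : (Finset.univ.sup fun i => (-(u i)).toNat) ≤ m :=
      Finset.le_sup (f := fun r : Q × (Fin d → ℤ) × Q =>
        Finset.univ.sup fun i => (-(r.2.1 i)).toNat) h1
    have h3 : (-(u k)).toNat ≤ Finset.univ.sup fun i => (-(u i)).toNat :=
      Finset.le_sup (f := fun i => (-(u i)).toNat) (Finset.mem_univ k)
    have h4 : (-(u k)) ≤ ((-(u k)).toNat : ℤ) := Int.self_le_toNat _
    have h5 : ((-(u k)).toNat : ℤ) ≤ (m : ℤ) := by exact_mod_cast le_trans h3 h2
    linarith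
  have hval : ValidOn A Finset.univ D := by
    refine ValidTree.imp ?_ ?_ hded
    · rintro c c' (⟨u, hu, he⟩ | ⟨hz', -⟩)
      · exact ⟨u, hu, fun i _ => he i⟩
      · rw [hz] at hz'; exact absurd hz' (Set.notMem_empty _)
    · rintro c c₁ c₂ (⟨h1, h2, h3⟩ | ⟨h1, h2⟩)
      · exact Or.inl ⟨h1, fun i _ => congrFun h2 i, fun i _ => congrFun h3 i⟩
      · exact Or.inr ⟨h1, fun i _ => congrFun h2 i⟩
  obtain ⟨D', hv', hr', hl', hh'⟩ :=
    main_lemma hm Qℓ d Finset.univ (by simp) D hval hl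
  refine ⟨D', ?_, by rw [hr', hroot], hl', hh'⟩
  refine ValidTree.imp ?_ ?_ hv'
  · rintro c c' ⟨u, hu, he⟩
    exact Or.inl ⟨u, hu, fun i => he i (Finset.mem_univ i)⟩
  · rintro c c₁ c₂ (⟨h1, h2, h3⟩ | ⟨h1, h2⟩)
    · exact Or.inl ⟨h1, funext fun i => h2 i (Finset.mem_univ i),
        funext fun i => h3 i (Finset.mem_univ i)⟩
    · exact Or.inr ⟨h1, funext fun i => h2 i (Finset.mem_univ i)⟩
end

section
/- Let A = (Q, d, T_u, T_f, T_s, T_z) be an ABVASS₀ and let A′ be the ABVASSr obtained from A by reinterpreting each rule (q, q₁) ∈ T_z as a full reset. Then A, Q_ℓ ▷_ℓ q_r, 0 holds under the lossy semantics if and only if A′ has a (q_r, 0)-rooted Q_ℓ-leaf-covering deduction tree (a coverability witness). -/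
variable {Q ι : Type}

/-- Loss rule of the lossy semantics: from `(q, v)` derive `(q, v - e_i)`. -/
def LossStep (c c' : Config Q ι) : Prop :=
  c'.1 = c.1 ∧ ∃ i, c.2 i = c'.2 i + 1 ∧ ∀ j, j ≠ i → c.2 j = c'.2 j

/-- Full reset rule of ABVASSr: from `(q, v)` derive `(q₁, 0)`. -/
def ResetStep (A : ABVASS Q ι) (c c' : Config Q ι) : Prop :=
  (c.1, c'.1) ∈ A.Tz ∧ c'.2 = (fun _ => 0)

section Aux

variable {Q : Type} {d : ℕ} (A : ABVASS Q (Fin d))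

/-- Lossy step relation. -/
def LStep (c c' : Config Q (Fin d)) : Prop :=
  UnaryStep A c c' ∨ ZeroStep A c c' ∨ LossStep c c'

/-- Reset step relation. -/
def RStep (c c' : Config Q (Fin d)) : Prop :=
  UnaryStep A c c' ∨ ResetStep A c c'

/-- From a lossy-valid tree rooted at `(q, 0)` we can build one rooted at `(q, v)`
by prepending loss steps. -/
lemma loss_chain (q : Q) (v : Fin d → ℕ) (t : DTree Q (Fin d))
    (ht : ValidTree (LStep A) (BinStep A) t) (hr : t.root = (q, fun _ => 0)) :
    ∃ t', ValidTree (LStep A) (BinStep A) t' ∧ t'.root = (q, v) ∧ t'.leaves = t.leaves := by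
  suffices H : ∀ n (v : Fin d → ℕ), ∑ i, v i = n →
      ∃ t', ValidTree (LStep A) (BinStep A) t' ∧ t'.root = (q, v) ∧ t'.leaves = t.leaves by
    exact H _ v rfl
  intro n
  induction n using Nat.strong_induction_on with
  | _ n ih =>
    intro v hv
    rcases Nat.eq_zero_or_pos n with hn | hn
    · have hv0 : ∀ i, v i = 0 := by
        intro i
        have := Finset.sum_eq_zero_iff.mp (hv.trans hn)
        exact this i (Finset.mem_univ i)
      have : v = (fun _ => 0) := funext hv0
      exact ⟨t, ht, by rw [hr, this], rfl⟩
    · have hex : ∃ i, v i ≠ 0 := by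
        by_contra h
        push_neg at h
        have : ∑ i, v i = 0 := Finset.sum_eq_zero (fun i _ => h i)
        omega
      obtain ⟨i, hi⟩ := hex
      set v' := Function.update v i (v i - 1) with hv'
      have hsum' : ∑ j, v' j = n - 1 := by
        have h1 : ∑ j, v' j = (v i - 1) + ∑ j ∈ Finset.univ.erase i, v j := by
          rw [hv', Finset.sum_update_of_mem (Finset.mem_univ i), ← Finset.erase_eq]
        have h2 : ∑ j, v j = v i + ∑ j ∈ Finset.univ.erase i, v j := by
          rw [Finset.add_sum_erase _ _ (Finset.mem_univ i)]
        omega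
      obtain ⟨t'', ht'', hr'', hl''⟩ := ih (n - 1) (by omega) v' hsum'
      refine ⟨.node1 (q, v) t'', ?_, rfl, hl''⟩
      refine ValidTree.one ?_ ht''
      rw [hr'']
      right; right
      refine ⟨rfl, i, ?_, ?_⟩
      · simp only [hv', Function.update_self]
        omega
      · intro j hj
        simp [hv', Function.update_of_ne hj]

/-- Monotonicity of reset trees: raising the root vector preserves derivability
and leaf states. -/
lemma reset_mono : ∀ (t : DTree Q (Fin d)), ValidTree (RStep A) (BinStep A) t →
    ∀ (v : Fin d → ℕ), (∀ i, t.root.2 i ≤ v i) →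
    ∃ t', ValidTree (RStep A) (BinStep A) t' ∧ t'.root = (t.root.1, v) ∧
      ∀ l' ∈ t'.leaves, ∃ l ∈ t.leaves, l'.1 = l.1 := by
  intro t ht
  induction ht with
  | leaf c =>
    intro v _
    exact ⟨.leaf (c.1, v), ValidTree.leaf _, rfl, by simp [DTree.leaves]⟩
  | @one c t h ht ih =>
    intro v hv
    simp only [DTree.root] at hv
    rcases h with hun | hres
    · obtain ⟨u, hu, hvec⟩ := hun
      set v₁ : Fin d → ℕ := fun i => t.root.2 i + (v i - c.2 i) with hv₁
      obtain ⟨t'', ht'', hr'', hl''⟩ := ih v₁ (fun i => by simp [hv₁])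
      refine ⟨.node1 (c.1, v) t'', ValidTree.one ?_ ht'', rfl, ?_⟩
      · left
        refine ⟨u, by rw [hr'']; exact hu, ?_⟩
        intro i
        rw [hr'']
        have h1 := hvec i
        have h2 := hv i
        simp only [hv₁]
        push_cast [Nat.cast_sub h2]
        omega
      · simpa [DTree.leaves] using hl''
    · obtain ⟨hmem, h0⟩ := hres
      refine ⟨.node1 (c.1, v) t, ValidTree.one ?_ ht, rfl, ?_⟩
      · right; exact ⟨hmem, h0⟩
      · intro l' hl'
        exact ⟨l', hl', rfl⟩
  | @two c t₁ t₂ h ht₁ ht₂ ih₁ ih₂ =>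
    intro v hv
    simp only [DTree.root] at hv
    rcases h with ⟨hmem, h1, h2⟩ | ⟨hmem, hsum⟩
    · obtain ⟨t₁', ht₁', hr₁', hl₁'⟩ := ih₁ v (fun i => by rw [h1]; exact hv i)
      obtain ⟨t₂', ht₂', hr₂', hl₂'⟩ := ih₂ v (fun i => by rw [h2]; exact hv i)
      refine ⟨.node2 (c.1, v) t₁' t₂', ValidTree.two ?_ ht₁' ht₂', rfl, ?_⟩
      · left
        rw [hr₁', hr₂']
        exact ⟨hmem, rfl, rfl⟩
      · intro l' hl'
        simp only [DTree.leaves, List.mem_append] at hl' ⊢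
        rcases hl' with hl' | hl'
        · obtain ⟨l, hl, he⟩ := hl₁' l' hl'; exact ⟨l, Or.inl hl, he⟩
        · obtain ⟨l, hl, he⟩ := hl₂' l' hl'; exact ⟨l, Or.inr hl, he⟩
    · set v₁ : Fin d → ℕ := fun i => t₁.root.2 i + (v i - c.2 i) with hv₁
      obtain ⟨t₁', ht₁', hr₁', hl₁'⟩ := ih₁ v₁ (fun i => by simp [hv₁])
      obtain ⟨t₂', ht₂', hr₂', hl₂'⟩ := ih₂ t₂.root.2 (fun i => le_refl _)
      refine ⟨.node2 (c.1, v) t₁' t₂', ValidTree.two ?_ ht₁' ht₂', rfl, ?_⟩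
      · right
        rw [hr₁', hr₂']
        refine ⟨hmem, funext fun i => ?_⟩
        have h1 : c.2 i = t₁.root.2 i + t₂.root.2 i := congrFun hsum i
        have h2 := hv i
        show v i = v₁ i + t₂.root.2 i
        simp only [hv₁]
        omega
      · intro l' hl'
        simp only [DTree.leaves, List.mem_append] at hl' ⊢
        rcases hl' with hl' | hl'
        · obtain ⟨l, hl, he⟩ := hl₁' l' hl'; exact ⟨l, Or.inl hl, he⟩
        · obtain ⟨l, hl, he⟩ := hl₂' l' hl'; exact ⟨l, Or.inr hl, he⟩

/-- From a lossy tree we get a reset tree with the same root and leaf states. -/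
lemma lossy_to_reset : ∀ (t : DTree Q (Fin d)), ValidTree (LStep A) (BinStep A) t →
    ∃ t', ValidTree (RStep A) (BinStep A) t' ∧ t'.root = t.root ∧
      ∀ l' ∈ t'.leaves, ∃ l ∈ t.leaves, l'.1 = l.1 := by
  intro t ht
  induction ht with
  | leaf c =>
    exact ⟨.leaf c, ValidTree.leaf _, rfl, fun l' hl' => ⟨l', hl', rfl⟩⟩
  | @one c t h ht ih =>
    obtain ⟨t'', ht'', hr'', hl''⟩ := ih
    rcases h with hun | hz | hloss
    · exact ⟨.node1 c t'', ValidTree.one (Or.inl (by rw [hr'']; exact hun)) ht'', rfl,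
        by simpa [DTree.leaves] using hl''⟩
    · obtain ⟨hmem, hc0, hc'0⟩ := hz
      refine ⟨.node1 c t'', ValidTree.one ?_ ht'', rfl, by simpa [DTree.leaves] using hl''⟩
      right
      rw [hr'']
      exact ⟨hmem, hc'0⟩
    · obtain ⟨hq, i, hi, hj⟩ := hloss
      have hle : ∀ k, t''.root.2 k ≤ c.2 k := by
        intro k
        rw [hr'']
        by_cases hk : k = i
        · subst hk; omega
        · rw [hj k hk]
      obtain ⟨t', ht', hr', hl'⟩ := reset_mono A t'' ht'' c.2 hle
      refine ⟨t', ht', ?_, ?_⟩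
      · rw [hr', hr'', hq]; exact Prod.mk.eta
      · intro l' hl₀
        obtain ⟨m, hm, he⟩ := hl' l' hl₀
        obtain ⟨l, hl, he'⟩ := hl'' m hm
        exact ⟨l, hl, he.trans he'⟩
  | @two c t₁ t₂ h ht₁ ht₂ ih₁ ih₂ =>
    obtain ⟨t₁', ht₁', hr₁', hl₁'⟩ := ih₁
    obtain ⟨t₂', ht₂', hr₂', hl₂'⟩ := ih₂
    refine ⟨.node2 c t₁' t₂', ValidTree.two (by rw [hr₁', hr₂']; exact h) ht₁' ht₂', rfl, ?_⟩
    intro l' hl'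
    simp only [DTree.leaves, List.mem_append] at hl' ⊢
    rcases hl' with hl' | hl'
    · obtain ⟨l, hl, he⟩ := hl₁' l' hl'; exact ⟨l, Or.inl hl, he⟩
    · obtain ⟨l, hl, he⟩ := hl₂' l' hl'; exact ⟨l, Or.inr hl, he⟩

/-- From a reset tree we get a lossy tree with the same root, whose leaves are
at zero with states among the original leaf states. -/
lemma reset_to_lossy : ∀ (t : DTree Q (Fin d)), ValidTree (RStep A) (BinStep A) t →
    ∃ t', ValidTree (LStep A) (BinStep A) t' ∧ t'.root = t.root ∧
      ∀ l' ∈ t'.leaves, l'.2 = (fun _ => 0) ∧ ∃ l ∈ t.leaves, l'.1 = l.1 := by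
  intro t ht
  induction ht with
  | leaf c =>
    obtain ⟨t', ht', hr', hl'⟩ := loss_chain A c.1 c.2 (.leaf (c.1, fun _ => 0))
      (ValidTree.leaf _) rfl
    refine ⟨t', ht', hr', ?_⟩
    intro l' hl₀
    rw [hl'] at hl₀
    simp only [DTree.leaves, List.mem_singleton] at hl₀
    subst hl₀
    exact ⟨rfl, c, by simp [DTree.leaves]⟩
  | @one c t h ht ih =>
    obtain ⟨t'', ht'', hr'', hl''⟩ := ih
    rcases h with hun | hres
    · exact ⟨.node1 c t'', ValidTree.one (Or.inl (by rw [hr'']; exact hun)) ht'', rfl,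
        by simpa [DTree.leaves] using hl''⟩
    · obtain ⟨hmem, h0⟩ := hres
      have hz : ValidTree (LStep A) (BinStep A) (.node1 (c.1, fun _ => 0) t'') := by
        refine ValidTree.one ?_ ht''
        right; left
        refine ⟨?_, rfl, ?_⟩
        · rw [hr'']; exact hmem
        · rw [hr'', h0]
      obtain ⟨t', ht', hr', hl'⟩ := loss_chain A c.1 c.2 _ hz rfl
      refine ⟨t', ht', hr', ?_⟩
      intro l' hl₀
      rw [hl'] at hl₀
      simp only [DTree.leaves] at hl₀
      exact hl'' l' hl₀
  | @two c t₁ t₂ h ht₁ ht₂ ih₁ ih₂ =>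
    obtain ⟨t₁', ht₁', hr₁', hl₁'⟩ := ih₁
    obtain ⟨t₂', ht₂', hr₂', hl₂'⟩ := ih₂
    refine ⟨.node2 c t₁' t₂', ValidTree.two (by rw [hr₁', hr₂']; exact h) ht₁' ht₂', rfl, ?_⟩
    intro l' hl'
    simp only [DTree.leaves, List.mem_append] at hl' ⊢
    rcases hl' with hl' | hl'
    · obtain ⟨h0, l, hl, he⟩ := hl₁' l' hl'; exact ⟨h0, l, Or.inl hl, he⟩
    · obtain ⟨h0, l, hl, he⟩ := hl₂' l' hl'; exact ⟨h0, l, Or.inr hl, he⟩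

end Aux

/-- `A, Q_ℓ ▷_ℓ q_r, 0` holds under the lossy semantics iff the ABVASSr
obtained from `A` by reinterpreting the rules of `T_z` as full resets has
a `(q_r, 0)`-rooted `Q_ℓ`-leaf-covering deduction tree. -/
theorem lossy_reach_iff_topdown_cover {Q : Type} [Fintype Q] {d : ℕ}
    (A : ABVASS Q (Fin d)) (qr : Q) (Qℓ : Set Q) :
    (∃ D : DTree Q (Fin d),
        ValidTree (fun c c' => UnaryStep A c c' ∨ ZeroStep A c c' ∨ LossStep c c')
          (BinStep A) D ∧
        D.root = (qr, fun _ => 0) ∧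
        ∀ l ∈ D.leaves, l.1 ∈ Qℓ ∧ l.2 = (fun _ => 0)) ↔
    (∃ D : DTree Q (Fin d),
        ValidTree (fun c c' => UnaryStep A c c' ∨ ResetStep A c c')
          (BinStep A) D ∧
        D.root = (qr, fun _ => 0) ∧
        ∀ l ∈ D.leaves, l.1 ∈ Qℓ) := by
  constructor
  · rintro ⟨D, hD, hroot, hleaves⟩
    obtain ⟨D', hD', hr', hl'⟩ := lossy_to_reset A D hD
    refine ⟨D', hD', hr'.trans hroot, ?_⟩
    intro l' hl₀
    obtain ⟨l, hl, he⟩ := hl' l' hl₀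
    rw [he]
    exact (hleaves l hl).1
  · rintro ⟨D, hD, hroot, hleaves⟩
    obtain ⟨D', hD', hr', hl'⟩ := reset_to_lossy A D hD
    refine ⟨D', hD', hr'.trans hroot, ?_⟩
    intro l' hl₀
    obtain ⟨h0, l, hl, he⟩ := hl' l' hl₀
    exact ⟨he ▸ hleaves l hl, h0⟩
end

section
/- Let A = (Q, d, T_u, T_f, T_s, T_z) be an ABVASS₀, Q_ℓ a finite set of states, and suppose A, Q_ℓ ▷ q_r, 0 (there is a reachability witness). Then there is a reachability witness for (q_r, 0) in which, along every path from the root to a leaf, the number of applications of full zero test rules is at most |Q| − 1. -/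
/-- Deduction trees recording which rule is applied at each internal node. -/
inductive TTree (Q ι : Type) where
  | leaf : Config Q ι → TTree Q ι
  | unary : (ι → ℤ) → Config Q ι → TTree Q ι → TTree Q ι
  | zero : Config Q ι → TTree Q ι → TTree Q ι
  | fork : Config Q ι → TTree Q ι → TTree Q ι → TTree Q ι
  | split : Config Q ι → TTree Q ι → TTree Q ι → TTree Q ι

namespace TTree

variable {Q ι : Type}

def root : TTree Q ι → Config Q ι
  | .leaf c => c
  | .unary _ c _ => c
  | .zero c _ => c
  | .fork c _ _ => c
  | .split c _ _ => c

def leaves : TTree Q ι → List (Config Q ι)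
  | .leaf c => [c]
  | .unary _ _ t => t.leaves
  | .zero _ t => t.leaves
  | .fork _ t₁ t₂ => t₁.leaves ++ t₂.leaves
  | .split _ t₁ t₂ => t₁.leaves ++ t₂.leaves

/-- Maximum number of full zero test applications along a root-to-leaf path. -/
def maxZ : TTree Q ι → ℕ
  | .leaf _ => 0
  | .unary _ _ t => t.maxZ
  | .zero _ t => t.maxZ + 1
  | .fork _ t₁ t₂ => max t₁.maxZ t₂.maxZ
  | .split _ t₁ t₂ => max t₁.maxZ t₂.maxZ

end TTree

/-- Validity of a (tagged) deduction tree of an ABVASS₀. -/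
inductive TValid {Q ι : Type} (A : ABVASS Q ι) : TTree Q ι → Prop
  | leaf (c : Config Q ι) : TValid A (.leaf c)
  | unary {c : Config Q ι} {t : TTree Q ι} (u : ι → ℤ) :
      (c.1, u, t.root.1) ∈ A.Tu →
      (∀ i, (t.root.2 i : ℤ) = (c.2 i : ℤ) + u i) →
      TValid A t → TValid A (.unary u c t)
  | zero {c : Config Q ι} {t : TTree Q ι} :
      (c.1, t.root.1) ∈ A.Tz → c.2 = (fun _ => 0) → t.root.2 = (fun _ => 0) →
      TValid A t → TValid A (.zero c t)
  | fork {c : Config Q ι} {t₁ t₂ : TTree Q ι} :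
      (c.1, t₁.root.1, t₂.root.1) ∈ A.Tf →
      t₁.root.2 = c.2 → t₂.root.2 = c.2 →
      TValid A t₁ → TValid A t₂ → TValid A (.fork c t₁ t₂)
  | split {c : Config Q ι} {t₁ t₂ : TTree Q ι} :
      (c.1, t₁.root.1, t₂.root.1) ∈ A.Ts →
      c.2 = t₁.root.2 + t₂.root.2 →
      TValid A t₁ → TValid A t₂ → TValid A (.split c t₁ t₂)

namespace TTree
/-- Size of a deduction tree. -/
def size {Q ι : Type} : TTree Q ι → ℕ
  | .leaf _ => 1
  | .unary _ _ t => t.size + 1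
  | .zero _ t => t.size + 1
  | .fork _ t₁ t₂ => t₁.size + t₂.size + 1
  | .split _ t₁ t₂ => t₁.size + t₂.size + 1
end TTree

/-- `SubEq a t` : `a` occurs as a subtree of `t`. -/
inductive SubEq {Q ι : Type} : TTree Q ι → TTree Q ι → Prop
  | refl (t : TTree Q ι) : SubEq t t
  | unary {a t : TTree Q ι} (u c) : SubEq a t → SubEq a (.unary u c t)
  | zero {a t : TTree Q ι} (c) : SubEq a t → SubEq a (.zero c t)
  | forkL {a t₁ t₂ : TTree Q ι} (c) : SubEq a t₁ → SubEq a (.fork c t₁ t₂)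
  | forkR {a t₁ t₂ : TTree Q ι} (c) : SubEq a t₂ → SubEq a (.fork c t₁ t₂)
  | splitL {a t₁ t₂ : TTree Q ι} (c) : SubEq a t₁ → SubEq a (.split c t₁ t₂)
  | splitR {a t₁ t₂ : TTree Q ι} (c) : SubEq a t₂ → SubEq a (.split c t₁ t₂)

variable {Q ι : Type}

theorem SubEq.size_le {a t : TTree Q ι} (h : SubEq a t) : a.size ≤ t.size := by
  induction h <;> simp [TTree.size] <;> omega

theorem SubEq.leaves_subset {a t : TTree Q ι} (h : SubEq a t) :
    ∀ x ∈ a.leaves, x ∈ t.leaves := by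
  induction h <;> intro x hx <;> simp_all [TTree.leaves]

theorem SubEq.valid {A : ABVASS Q ι} {a t : TTree Q ι} (h : SubEq a t) :
    TValid A t → TValid A a := by
  induction h with
  | refl => exact id
  | unary u c _ ih => intro hv; cases hv; apply ih; assumption
  | zero c _ ih => intro hv; cases hv; apply ih; assumption
  | forkL c _ ih => intro hv; cases hv; apply ih; assumption
  | forkR c _ ih => intro hv; cases hv; apply ih; assumption
  | splitL c _ ih => intro hv; cases hv; apply ih; assumption
  | splitR c _ ih => intro hv; cases hv; apply ih; assumption

/-- Replacing an occurrence of the subtree `a` of `t` by a valid tree `b` with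
the same root configuration and smaller size. -/
theorem SubEq.replace {A : ABVASS Q ι} {a t b : TTree Q ι} (hsub : SubEq a t)
    (hvb : TValid A b) (hroot : b.root = a.root) (hsize : b.size < a.size) :
    TValid A t → ∃ t', TValid A t' ∧ t'.root = t.root ∧ t'.size < t.size ∧
      ∀ x ∈ t'.leaves, x ∈ t.leaves ∨ x ∈ b.leaves := by
  induction hsub with
  | refl =>
      intro _
      exact ⟨b, hvb, hroot, hsize, fun x hx => Or.inr hx⟩
  | unary u c hs ih =>
      intro hv
      cases hv with
      | unary _ hmem harith hvt =>
          obtain ⟨t', h1, h2, h3, h4⟩ := ih hvt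
          exact ⟨.unary u c t', .unary u (by rwa [h2]) (by rwa [h2]) h1, rfl,
            by simp [TTree.size]; omega, by simpa [TTree.leaves] using h4⟩
  | zero c hs ih =>
      intro hv
      cases hv with
      | zero hmem hc ht hvt =>
          obtain ⟨t', h1, h2, h3, h4⟩ := ih hvt
          exact ⟨.zero c t', .zero (by rwa [h2]) hc (by rwa [h2]) h1, rfl,
            by simp [TTree.size]; omega, by simpa [TTree.leaves] using h4⟩
  | forkL c hs ih =>
      intro hv
      cases hv with
      | fork hmem hr1 hr2 hv1 hv2 =>
          obtain ⟨t', h1, h2, h3, h4⟩ := ih hv1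
          refine ⟨.fork c t' _, .fork (by rwa [h2]) (by rwa [h2]) hr2 h1 hv2, rfl,
            by simp [TTree.size]; omega, ?_⟩
          intro x hx
          simp only [TTree.leaves, List.mem_append] at hx ⊢
          rcases hx with hx | hx
          · rcases h4 x hx with h | h
            · exact Or.inl (Or.inl h)
            · exact Or.inr h
          · exact Or.inl (Or.inr hx)
  | forkR c hs ih =>
      intro hv
      cases hv with
      | fork hmem hr1 hr2 hv1 hv2 =>
          obtain ⟨t', h1, h2, h3, h4⟩ := ih hv2
          refine ⟨.fork c _ t', .fork (by rwa [h2]) hr1 (by rwa [h2]) hv1 h1, rfl,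
            by simp [TTree.size]; omega, ?_⟩
          intro x hx
          simp only [TTree.leaves, List.mem_append] at hx ⊢
          rcases hx with hx | hx
          · exact Or.inl (Or.inl hx)
          · rcases h4 x hx with h | h
            · exact Or.inl (Or.inr h)
            · exact Or.inr h
  | splitL c hs ih =>
      intro hv
      cases hv with
      | split hmem hsum hv1 hv2 =>
          obtain ⟨t', h1, h2, h3, h4⟩ := ih hv1
          refine ⟨.split c t' _, .split (by rwa [h2]) (by rwa [h2]) h1 hv2, rfl,
            by simp [TTree.size]; omega, ?_⟩
          intro x hx
          simp only [TTree.leaves, List.mem_append] at hx ⊢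
          rcases hx with hx | hx
          · rcases h4 x hx with h | h
            · exact Or.inl (Or.inl h)
            · exact Or.inr h
          · exact Or.inl (Or.inr hx)
  | splitR c hs ih =>
      intro hv
      cases hv with
      | split hmem hsum hv1 hv2 =>
          obtain ⟨t', h1, h2, h3, h4⟩ := ih hv2
          refine ⟨.split c _ t', .split (by rwa [h2]) (by rwa [h2]) hv1 h1, rfl,
            by simp [TTree.size]; omega, ?_⟩
          intro x hx
          simp only [TTree.leaves, List.mem_append] at hx ⊢
          rcases hx with hx | hx
          · exact Or.inl (Or.inl hx)
          · rcases h4 x hx with h | h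
            · exact Or.inl (Or.inr h)
            · exact Or.inr h

/-- Along a path with `n ≥ 1` zero tests one finds a strictly decreasing chain of
`n+1` subtrees whose root vectors are zero. -/
theorem zero_chain {A : ABVASS Q ι} {t : TTree Q ι} (hv : TValid A t) :
    ∀ n, 1 ≤ n → n ≤ t.maxZ →
    ∃ l : List (TTree Q ι), l.length = n + 1 ∧
      (∀ s ∈ l, SubEq s t ∧ s.root.2 = (fun _ => 0)) ∧
      l.Pairwise (fun x y => SubEq y x ∧ y.size < x.size) := by
  induction hv with
  | leaf c =>
      intro n h1 h2
      simp [TTree.maxZ] at h2; omega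
  | unary u hmem harith hvt ih =>
      intro n h1 h2
      obtain ⟨l, hl1, hl2, hl3⟩ := ih n h1 (by simpa [TTree.maxZ] using h2)
      exact ⟨l, hl1, fun s hs => ⟨(hl2 s hs).1.unary _ _, (hl2 s hs).2⟩, hl3⟩
  | zero hmem hc ht hvt ih =>
      rename_i c t
      intro n h1 h2
      simp only [TTree.maxZ] at h2
      rcases eq_or_lt_of_le h1 with h1' | h1'
      · refine ⟨[.zero c t, t], by simp [← h1'], ?_, ?_⟩
        · intro s hs
          simp only [List.mem_cons, List.mem_singleton, List.not_mem_nil, or_false] at hs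
          rcases hs with rfl | rfl
          · exact ⟨.refl _, by simpa [TTree.root] using hc⟩
          · exact ⟨.zero _ (.refl _), ht⟩
        · refine List.Pairwise.cons ?_ (List.pairwise_singleton _ _)
          intro y hy
          simp only [List.mem_singleton] at hy
          subst hy
          exact ⟨.zero _ (.refl _), by simp [TTree.size]⟩
      · obtain ⟨l, hl1, hl2, hl3⟩ := ih (n - 1) (by omega) (by omega)
        refine ⟨.zero c t :: l, by simp [hl1]; omega, ?_, ?_⟩
        · intro s hs
          rcases List.mem_cons.mp hs with rfl | hs
          · exact ⟨.refl _, by simpa [TTree.root] using hc⟩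
          · exact ⟨(hl2 s hs).1.zero _, (hl2 s hs).2⟩
        · refine List.Pairwise.cons ?_ hl3
          intro y hy
          refine ⟨(hl2 y hy).1.zero _, ?_⟩
          have := (hl2 y hy).1.size_le
          simp [TTree.size]; omega
  | fork hmem hr1 hr2 hv1 hv2 ih1 ih2 =>
      intro n h1 h2
      simp only [TTree.maxZ, le_max_iff] at h2
      rcases h2 with h2 | h2
      · obtain ⟨l, hl1, hl2, hl3⟩ := ih1 n h1 h2
        exact ⟨l, hl1, fun s hs => ⟨(hl2 s hs).1.forkL _, (hl2 s hs).2⟩, hl3⟩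
      · obtain ⟨l, hl1, hl2, hl3⟩ := ih2 n h1 h2
        exact ⟨l, hl1, fun s hs => ⟨(hl2 s hs).1.forkR _, (hl2 s hs).2⟩, hl3⟩
  | split hmem hsum hv1 hv2 ih1 ih2 =>
      intro n h1 h2
      simp only [TTree.maxZ, le_max_iff] at h2
      rcases h2 with h2 | h2
      · obtain ⟨l, hl1, hl2, hl3⟩ := ih1 n h1 h2
        exact ⟨l, hl1, fun s hs => ⟨(hl2 s hs).1.splitL _, (hl2 s hs).2⟩, hl3⟩
      · obtain ⟨l, hl1, hl2, hl3⟩ := ih2 n h1 h2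
        exact ⟨l, hl1, fun s hs => ⟨(hl2 s hs).1.splitR _, (hl2 s hs).2⟩, hl3⟩

/-- Any valid tree can be transformed into one with the same root, a subset of
leaves, and at most `|Q| - 1` zero tests on each path. -/
theorem shrink {Q : Type} [Fintype Q] {ι : Type} {A : ABVASS Q ι} :
    ∀ N (t : TTree Q ι), t.size ≤ N → TValid A t →
    ∃ t', TValid A t' ∧ t'.root = t.root ∧ (∀ x ∈ t'.leaves, x ∈ t.leaves) ∧
      t'.maxZ ≤ Fintype.card Q - 1 := by
  intro N
  induction N with
  | zero => intro t h; cases t <;> simp [TTree.size] at h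
  | succ N ihN =>
      intro t hsz hv
      by_cases hm : t.maxZ ≤ Fintype.card Q - 1
      · exact ⟨t, hv, rfl, fun x h => h, hm⟩
      · have hQ : 0 < Fintype.card Q := @Fintype.card_pos _ _ ⟨t.root.1⟩
        have hn : Fintype.card Q ≤ t.maxZ := by omega
        obtain ⟨l, hl1, hl2, hl3⟩ := zero_chain hv (Fintype.card Q) hQ hn
        obtain ⟨i, j, hne, heq⟩ :=
          Fintype.exists_ne_map_eq_of_card_lt
            (fun i : Fin l.length => (l.get i).root.1) (by simp [hl1])
        have key : ∀ i j : Fin l.length, i < j →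
            (l.get i).root.1 = (l.get j).root.1 →
            ∃ t', TValid A t' ∧ t'.root = t.root ∧
              (∀ x ∈ t'.leaves, x ∈ t.leaves) ∧ t'.maxZ ≤ Fintype.card Q - 1 := by
          intro i j hij hqeq
          set a := l.get i with ha
          set b := l.get j with hb
          have hRab := List.pairwise_iff_get.mp hl3 i j hij
          have hma := hl2 a (List.get_mem l i)
          have hmb := hl2 b (List.get_mem l j)
          have hvb : TValid A b := hmb.1.valid hv
          have hroot : b.root = a.root :=
            Prod.ext_iff.mpr ⟨hqeq.symm, by rw [hma.2, hmb.2]⟩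
          obtain ⟨t'', h1, h2, h3, h4⟩ := hma.1.replace hvb hroot hRab.2 hv
          obtain ⟨t', g1, g2, g3, g4⟩ := ihN t'' (by omega) h1
          refine ⟨t', g1, g2.trans h2, ?_, g4⟩
          intro x hx
          rcases h4 x (g3 x hx) with h | h
          · exact h
          · exact hmb.1.leaves_subset x h
        rcases lt_or_gt_of_ne hne with hij | hij
        · exact key i j hij heq
        · exact key j i hij heq.symm

/-- If `A, Q_ℓ ▷ q_r, 0`, then there is a reachability witness for
`(q_r, 0)` in which the number of full zero tests along every root-to-leaf
path is at most `|Q| - 1`. -/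
theorem few_zero_tests {Q : Type} [Fintype Q] {d : ℕ}
    (A : ABVASS Q (Fin d)) (qr : Q) (Qℓ : Set Q)
    (hex : ∃ D : TTree Q (Fin d), TValid A D ∧ D.root = (qr, fun _ => 0) ∧
      ∀ l ∈ D.leaves, l.1 ∈ Qℓ ∧ l.2 = (fun _ => 0)) :
    ∃ D : TTree Q (Fin d), TValid A D ∧ D.root = (qr, fun _ => 0) ∧
      (∀ l ∈ D.leaves, l.1 ∈ Qℓ ∧ l.2 = (fun _ => 0)) ∧
      D.maxZ ≤ Fintype.card Q - 1 := by
  obtain ⟨D, hv, hroot, hleaves⟩ := hex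
  obtain ⟨D', hv', hroot', hsub, hmz⟩ := shrink D.size D le_rfl hv
  exact ⟨D', hv', hroot'.trans hroot, fun x hx => hleaves x (hsub x hx), hmz⟩
end

section
/- Let A = (Q, d, T_u, T_f, T_s, T_z) be an ABVASS₀, let A′ = (Q, d, T_u, T_f, T_s, ∅), let Root_B(X) = { q ∈ Q | B, X ▷ q, 0 } for an ABVASS₀ B and X ⊆ Q, and let T_z^{-1}(X) = { q ∈ Q | ∃ q₁ ∈ X, (q, q₁) ∈ T_z }. Then the map F(X) = Root_{A′}(Q_ℓ) ∪ Root_{A′}(X ∪ T_z^{-1}(X)) is monotone on subsets of Q, Root_A(Q_ℓ) is its least fixed point, and this least fixed point is attained by iterating F at most |Q| times starting from the empty set. -/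
variable {Q ι : Type}

/-- `Root_B(X)`: states `q` such that `B, X ▷ q, 0`. -/
def RootSet (A : ABVASS Q ι) (X : Set Q) : Set Q :=
  {q | ∃ D : DTree Q ι, IsDeduction A D ∧ D.root = (q, fun _ => 0) ∧
    ∀ l ∈ D.leaves, l.1 ∈ X ∧ l.2 = (fun _ => 0)}

/-- `A` with its full zero tests removed. -/
def eraseZ (A : ABVASS Q ι) : ABVASS Q ι := { A with Tz := ∅ }

/-- `T_z⁻¹(X)`: states with a full zero test rule into `X`. -/
def TzInv (A : ABVASS Q ι) (X : Set Q) : Set Q :=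
  {q | ∃ q₁ ∈ X, (q, q₁) ∈ A.Tz}

/-- The operator `F(X) = Root_{A'}(Q_ℓ) ∪ Root_{A'}(X ∪ T_z⁻¹(X))`,
where `A'` is `A` without full zero tests. -/
def Fop (A : ABVASS Q ι) (Qℓ : Set Q) (X : Set Q) : Set Q :=
  RootSet (eraseZ A) Qℓ ∪ RootSet (eraseZ A) (X ∪ TzInv A X)

section AuxLemmas

variable {Q' : Type} {ι' : Type}

/-- Deduction trees of `eraseZ A` are deduction trees of `A`. -/
lemma isDeduction_of_eraseZ {A : ABVASS Q' ι'} {D : DTree Q' ι'}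
    (h : IsDeduction (eraseZ A) D) : IsDeduction A D := by
  induction h with
  | leaf c => exact ValidTree.leaf c
  | one h1 _ ih =>
    refine ValidTree.one ?_ ih
    rcases h1 with h | h
    · exact Or.inl h
    · exact absurd h.1 (by simp [eraseZ])
  | two h2 _ _ ih1 ih2 => exact ValidTree.two h2 ih1 ih2

lemma rootSet_mono (A : ABVASS Q' ι') {X Y : Set Q'} (hXY : X ⊆ Y) :
    RootSet A X ⊆ RootSet A Y := by
  rintro q ⟨D, hD, hr, hl⟩
  exact ⟨D, hD, hr, fun l hl' => ⟨hXY (hl l hl').1, (hl l hl').2⟩⟩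

lemma tzInv_mono (A : ABVASS Q' ι') {X Y : Set Q'} (hXY : X ⊆ Y) :
    TzInv A X ⊆ TzInv A Y := by
  rintro q ⟨q₁, hq₁, hz⟩
  exact ⟨q₁, hXY hq₁, hz⟩

lemma fop_mono (A : ABVASS Q' ι') (Qℓ : Set Q') : Monotone (Fop A Qℓ) := by
  intro X Y hXY
  exact Set.union_subset_union_right _
    (rootSet_mono _ (Set.union_subset_union hXY (tzInv_mono A hXY)))

/-- Every state of the leaf set is in the root set (via a single-leaf tree). -/
lemma subset_rootSet (A : ABVASS Q' ι') (X : Set Q') : X ⊆ RootSet A X := by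
  intro q hq
  refine ⟨.leaf (q, fun _ => 0), ValidTree.leaf _, rfl, ?_⟩
  intro l hl
  simp only [DTree.leaves, List.mem_singleton] at hl
  subst hl
  exact ⟨hq, rfl⟩

/-- Grafting: if every leaf of a deduction tree has a witnessing deduction
tree whose leaves satisfy `P`, then the root has one too. -/
lemma graft {A : ABVASS Q' ι'} (P : Config Q' ι' → Prop) :
    ∀ {D : DTree Q' ι'}, IsDeduction A D →
    (∀ l ∈ D.leaves, ∃ E, IsDeduction A E ∧ E.root = l ∧ ∀ l' ∈ E.leaves, P l') →
    ∃ D', IsDeduction A D' ∧ D'.root = D.root ∧ ∀ l ∈ D'.leaves, P l := by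
  intro D hD
  induction hD with
  | leaf c =>
    intro h
    obtain ⟨E, hE, hr, hl⟩ := h c (by simp [DTree.leaves])
    exact ⟨E, hE, hr, hl⟩
  | @one c t hs ht ih =>
    intro h
    obtain ⟨t', ht', hr', hl'⟩ := ih (fun l hl => h l (by simpa [DTree.leaves] using hl))
    refine ⟨.node1 c t', ValidTree.one ?_ ht', rfl, ?_⟩
    · rw [hr']; exact hs
    · simpa [DTree.leaves] using hl'
  | @two c t₁ t₂ hs ht₁ ht₂ ih₁ ih₂ =>
    intro h
    obtain ⟨t₁', ht₁', hr₁', hl₁'⟩ :=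
      ih₁ (fun l hl => h l (by simp [DTree.leaves]; exact Or.inl hl))
    obtain ⟨t₂', ht₂', hr₂', hl₂'⟩ :=
      ih₂ (fun l hl => h l (by simp [DTree.leaves]; exact Or.inr hl))
    refine ⟨.node2 c t₁' t₂', ValidTree.two ?_ ht₁' ht₂', rfl, ?_⟩
    · rw [hr₁', hr₂']; exact hs
    · intro l hl
      simp only [DTree.leaves, List.mem_append] at hl
      rcases hl with hl | hl
      · exact hl₁' l hl
      · exact hl₂' l hl

/-- Truncation: a deduction of `A` with leaves in `Qℓ × {0}` can be turned
into a deduction of `eraseZ A` with the same root and leaves in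
`(X ∪ Tz⁻¹(X)) × {0}`, given the closure hypotheses on `X`. -/
lemma trunc {A : ABVASS Q' ι'} {Qℓ X : Set Q'}
    (hQX : Qℓ ⊆ X)
    (hFX : RootSet (eraseZ A) (X ∪ TzInv A X) ⊆ X) :
    ∀ {D : DTree Q' ι'}, IsDeduction A D →
      (∀ l ∈ D.leaves, l.1 ∈ Qℓ ∧ l.2 = (fun _ => 0)) →
      ∃ D', IsDeduction (eraseZ A) D' ∧ D'.root = D.root ∧
        ∀ l ∈ D'.leaves, l.1 ∈ X ∪ TzInv A X ∧ l.2 = (fun _ => 0) := by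
  intro D hD
  induction hD with
  | leaf c =>
    intro h
    obtain ⟨h1, h2⟩ := h c (by simp [DTree.leaves])
    refine ⟨.leaf c, ValidTree.leaf c, rfl, ?_⟩
    intro l hl
    simp only [DTree.leaves, List.mem_singleton] at hl
    subst hl
    exact ⟨Or.inl (hQX h1), h2⟩
  | @one c t hs ht ih =>
    intro h
    obtain ⟨t', ht', hr', hl'⟩ := ih (fun l hl => h l (by simpa [DTree.leaves] using hl))
    rcases hs with hu | hz
    · refine ⟨.node1 c t', ValidTree.one ?_ ht', rfl, ?_⟩
      · rw [hr']; exact Or.inl hu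
      · simpa [DTree.leaves] using hl'
    · -- zero test: truncate here
      obtain ⟨hmem, hc0, ht0⟩ := hz
      have hroot : t'.root = (t.root.1, fun _ => 0) := by
        rw [hr']; exact Prod.ext rfl ht0
      have hx : t.root.1 ∈ X := hFX ⟨t', ht', hroot, hl'⟩
      refine ⟨.leaf c, ValidTree.leaf c, rfl, ?_⟩
      intro l hl
      simp only [DTree.leaves, List.mem_singleton] at hl
      subst hl
      exact ⟨Or.inr ⟨t.root.1, hx, hmem⟩, hc0⟩
  | @two c t₁ t₂ hs ht₁ ht₂ ih₁ ih₂ =>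
    intro h
    obtain ⟨t₁', ht₁', hr₁', hl₁'⟩ :=
      ih₁ (fun l hl => h l (by simp [DTree.leaves]; exact Or.inl hl))
    obtain ⟨t₂', ht₂', hr₂', hl₂'⟩ :=
      ih₂ (fun l hl => h l (by simp [DTree.leaves]; exact Or.inr hl))
    refine ⟨.node2 c t₁' t₂', ValidTree.two ?_ ht₁' ht₂', rfl, ?_⟩
    · rw [hr₁', hr₂']; exact hs
    · intro l hl
      simp only [DTree.leaves, List.mem_append] at hl
      rcases hl with hl | hl
      · exact hl₁' l hl
      · exact hl₂' l hl

/-- Key corollary of truncation. -/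
lemma rootSet_subset_rootSet' {A : ABVASS Q' ι'} {Qℓ X : Set Q'}
    (hQX : Qℓ ⊆ X)
    (hFX : RootSet (eraseZ A) (X ∪ TzInv A X) ⊆ X) :
    RootSet A Qℓ ⊆ RootSet (eraseZ A) (X ∪ TzInv A X) := by
  rintro q ⟨D, hD, hr, hl⟩
  obtain ⟨D', hD', hr', hl'⟩ := trunc hQX hFX hD hl
  exact ⟨D', hD', by rw [hr', hr], hl'⟩

/-- `F(Root_A(Qℓ)) ⊆ Root_A(Qℓ)`. -/
lemma fop_rootSet_subset (A : ABVASS Q' ι') (Qℓ : Set Q') :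
    Fop A Qℓ (RootSet A Qℓ) ⊆ RootSet A Qℓ := by
  set R := RootSet A Qℓ with hR
  rintro q (⟨D, hD, hr, hl⟩ | ⟨D, hD, hr, hl⟩)
  · exact ⟨D, isDeduction_of_eraseZ hD, hr, hl⟩
  · -- graft witnessing trees onto the leaves
    have h : ∀ l ∈ D.leaves, ∃ E, IsDeduction A E ∧ E.root = l ∧
        ∀ l' ∈ E.leaves, l'.1 ∈ Qℓ ∧ l'.2 = (fun _ => 0) := by
      intro l hl'
      obtain ⟨hmem, h0⟩ := hl l hl'
      rcases hmem with hm | ⟨q₁, hq₁, hz⟩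
      · obtain ⟨E, hE, hrE, hlE⟩ := hm
        exact ⟨E, hE, by rw [hrE]; exact (Prod.ext rfl h0.symm), hlE⟩
      · obtain ⟨E, hE, hrE, hlE⟩ := hq₁
        refine ⟨.node1 l E, ValidTree.one (Or.inr ⟨?_, h0, ?_⟩) hE, rfl, ?_⟩
        · rw [hrE]; exact hz
        · rw [hrE]
        · simpa [DTree.leaves] using hlE
    obtain ⟨D', hD', hr', hl'⟩ := graft _ (isDeduction_of_eraseZ hD) h
    exact ⟨D', hD', by rw [hr', hr], hl'⟩

end AuxLemmas

/-- `F` is monotone, `Root_A(Q_ℓ)` is its least fixed point, and the least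
fixed point is attained by iterating `F` at most `|Q|` times from `∅`. -/
theorem rootSet_least_fixed_point {Q : Type} [Fintype Q] {d : ℕ}
    (A : ABVASS Q (Fin d)) (Qℓ : Set Q) :
    Monotone (Fop A Qℓ) ∧
    Fop A Qℓ (RootSet A Qℓ) = RootSet A Qℓ ∧
    (∀ X : Set Q, Fop A Qℓ X = X → RootSet A Qℓ ⊆ X) ∧
    (∃ n ≤ Fintype.card Q, (Fop A Qℓ)^[n] ∅ = RootSet A Qℓ) := by
  set R := RootSet A Qℓ with hRdef
  have hmono : Monotone (Fop A Qℓ) := fop_mono A Qℓ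
  -- F(R) ⊆ R
  have hFRsub : Fop A Qℓ R ⊆ R := fop_rootSet_subset A Qℓ
  have hQℓR : Qℓ ⊆ R := subset_rootSet A Qℓ
  have hFX' : RootSet (eraseZ A) (R ∪ TzInv A R) ⊆ R :=
    fun q hq => hFRsub (Or.inr hq)
  -- R ⊆ F(R)
  have hRsubF : R ⊆ Fop A Qℓ R :=
    fun q hq => Or.inr (rootSet_subset_rootSet' hQℓR hFX' hq)
  have hfix : Fop A Qℓ R = R := Set.Subset.antisymm hFRsub hRsubF
  -- least
  have hleast : ∀ X : Set Q, Fop A Qℓ X = X → R ⊆ X := by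
    intro X hX
    have hQX : Qℓ ⊆ X := by
      intro q hq
      rw [← hX]
      exact Or.inl (subset_rootSet (eraseZ A) Qℓ hq)
    have hFX : RootSet (eraseZ A) (X ∪ TzInv A X) ⊆ X := by
      intro q hq; rw [← hX]; exact Or.inr hq
    exact fun q hq => hFX (rootSet_subset_rootSet' hQX hFX hq)
  refine ⟨hmono, hfix, hleast, ?_⟩
  -- the iteration chain
  set f := Fop A Qℓ with hf
  have hchainR : ∀ n, f^[n] ∅ ⊆ R := by
    intro n
    induction n with
    | zero => simp
    | succ n ih =>
      rw [Function.iterate_succ_apply']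
      calc f (f^[n] ∅) ⊆ f R := hmono ih
        _ = R := hfix
  have hchain : ∀ n, f^[n] ∅ ⊆ f^[n+1] ∅ := by
    intro n
    induction n with
    | zero => simp
    | succ n ih =>
      rw [Function.iterate_succ_apply', Function.iterate_succ_apply']
      exact hmono ih
  -- a stabilization point exists within |Q| steps
  have hstab : ∃ n ≤ Fintype.card Q, f^[n+1] ∅ = f^[n] ∅ := by
    by_contra hcon
    push_neg at hcon
    have hcard : ∀ n ≤ Fintype.card Q + 1, n ≤ (f^[n] ∅).ncard := by
      intro n hn
      induction n with
      | zero => simp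
      | succ n ih =>
        have hne : f^[n+1] ∅ ≠ f^[n] ∅ := hcon n (by omega)
        have hlt : f^[n] ∅ ⊂ f^[n+1] ∅ :=
          Set.ssubset_iff_subset_ne.mpr ⟨hchain n, fun h => hne h.symm⟩
        have h3 := Set.ncard_lt_ncard hlt (Set.toFinite _)
        have h4 := ih (by omega)
        omega
    have h1 := hcard (Fintype.card Q + 1) le_rfl
    have h2 : (f^[Fintype.card Q + 1] ∅).ncard ≤ Fintype.card Q := by
      have := Set.ncard_le_ncard (Set.subset_univ (f^[Fintype.card Q + 1] ∅))
        (Set.finite_univ)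
      simpa [Set.ncard_univ, Nat.card_eq_fintype_card] using this
    omega
  obtain ⟨n, hn, hstabn⟩ := hstab
  refine ⟨n, hn, ?_⟩
  have hfixn : f (f^[n] ∅) = f^[n] ∅ := by
    rw [← Function.iterate_succ_apply' f n ∅]; exact hstabn
  exact Set.Subset.antisymm (hchainR n) (hleast _ hfixn)
end

section
/- Let A = (Q, d, T_u, T_f, T_s, ∅) be an ordinary ABVASS, Q_ℓ a finite set of states, and T(A) the associated theory. Then for all configurations (q, v) ∈ Q × ℕ^d, the root judgement A, Q_ℓ ▷ q, v holds if and only if the sequent ⊢ θ(q, v), ?Q_ℓ is provable in LL+T(A). -/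
variable {Q ι : Type}

/-- Propositional linear logic formulas in negation normal form over
atoms `α`. -/
inductive Fm (α : Type) where
  | pos : α → Fm α
  | neg : α → Fm α
  | parr : Fm α → Fm α → Fm α
  | tensor : Fm α → Fm α → Fm α
  | bot : Fm α
  | one : Fm α
  | wth : Fm α → Fm α → Fm α
  | oplus : Fm α → Fm α → Fm α
  | top : Fm α
  | zero : Fm α
  | bang : Fm α → Fm α
  | quest : Fm α → Fm α

variable {α : Type}

/-- Negation, via the De Morgan dualities. -/
def Fm.dual : Fm α → Fm α
  | .pos a => .neg a
  | .neg a => .pos a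
  | .parr f g => .tensor f.dual g.dual
  | .tensor f g => .parr f.dual g.dual
  | .bot => .one
  | .one => .bot
  | .wth f g => .oplus f.dual g.dual
  | .oplus f g => .wth f.dual g.dual
  | .top => .zero
  | .zero => .top
  | .bang f => .quest f.dual
  | .quest f => .bang f.dual

/-- MALL formulas: no exponential connectives. -/
def Fm.noExp : Fm α → Prop
  | .pos _ => True
  | .neg _ => True
  | .parr f g => f.noExp ∧ g.noExp
  | .tensor f g => f.noExp ∧ g.noExp
  | .bot => True
  | .one => True
  | .wth f g => f.noExp ∧ g.noExp
  | .oplus f g => f.noExp ∧ g.noExp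
  | .top => True
  | .zero => True
  | .bang _ => False
  | .quest _ => False

/-- A theory axiom `C, p₁⊥, …, p_m⊥`: a formula `C` together with the
list of atoms `p₁, …, p_m`. -/
abbrev LAxiom (α : Type) := Fm α × List α

/-- The sequent `⊢ C, p₁⊥, …, p_m⊥` of an axiom. -/
def axSeq (t : LAxiom α) : Multiset (Fm α) :=
  t.1 ::ₘ (t.2.map Fm.neg : Multiset (Fm α))

/-- Provability in full propositional linear logic LL extended with a
theory `T`: the rules of LL, the axiom rule, and the directed cut. -/
inductive LLT (T : Set (LAxiom α)) : Multiset (Fm α) → Prop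
  | init (f : Fm α) : LLT T {f, f.dual}
  | cut {Γ Δ : Multiset (Fm α)} (f : Fm α) :
      LLT T (f ::ₘ Γ) → LLT T (f.dual ::ₘ Δ) → LLT T (Γ + Δ)
  | parr {Γ : Multiset (Fm α)} (f g : Fm α) :
      LLT T (f ::ₘ g ::ₘ Γ) → LLT T (.parr f g ::ₘ Γ)
  | tensor {Γ Δ : Multiset (Fm α)} (f g : Fm α) :
      LLT T (f ::ₘ Γ) → LLT T (g ::ₘ Δ) → LLT T (.tensor f g ::ₘ (Γ + Δ))
  | bot {Γ : Multiset (Fm α)} : LLT T Γ → LLT T (.bot ::ₘ Γ)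
  | one : LLT T {Fm.one}
  | wth {Γ : Multiset (Fm α)} (f g : Fm α) :
      LLT T (f ::ₘ Γ) → LLT T (g ::ₘ Γ) → LLT T (.wth f g ::ₘ Γ)
  | oplus₁ {Γ : Multiset (Fm α)} (f g : Fm α) :
      LLT T (f ::ₘ Γ) → LLT T (.oplus f g ::ₘ Γ)
  | oplus₂ {Γ : Multiset (Fm α)} (f g : Fm α) :
      LLT T (g ::ₘ Γ) → LLT T (.oplus f g ::ₘ Γ)
  | top (Γ : Multiset (Fm α)) : LLT T (.top ::ₘ Γ)
  | qD {Γ : Multiset (Fm α)} (f : Fm α) :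
      LLT T (f ::ₘ Γ) → LLT T (.quest f ::ₘ Γ)
  | qW {Γ : Multiset (Fm α)} (f : Fm α) :
      LLT T Γ → LLT T (.quest f ::ₘ Γ)
  | qC {Γ : Multiset (Fm α)} (f : Fm α) :
      LLT T (.quest f ::ₘ .quest f ::ₘ Γ) → LLT T (.quest f ::ₘ Γ)
  | qP {Γ : Multiset (Fm α)} (f : Fm α) :
      (∀ g ∈ Γ, ∃ h, g = Fm.quest h) →
      LLT T (f ::ₘ Γ) → LLT T (.bang f ::ₘ Γ)
  | ax {t : LAxiom α} : t ∈ T → LLT T (axSeq t)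
  | dcut {Δ : Multiset (Fm α)} {t : LAxiom α} :
      t ∈ T → LLT T ((t.1).dual ::ₘ Δ) →
      LLT T ((t.2.map Fm.neg : Multiset (Fm α)) + Δ)

/-- The unit vector `e_i` in dimension `d`. -/
def unit {d : ℕ} (i : Fin d) : Fin d → ℤ := fun j => if j = i then 1 else 0

/-- The sequent `θ(q, v) = q⊥, (e₁⊥)^{v 1}, …, (e_d⊥)^{v d}` encoding a
configuration, over the atoms `Q ⊕ Fin d`. -/
def theta {Q : Type} {d : ℕ} (q : Q) (v : Fin d → ℕ) :
    Multiset (Fm (Q ⊕ Fin d)) :=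
  Fm.neg (Sum.inl q) ::ₘ
    (Finset.univ : Finset (Fin d)).sum
      (fun i => Multiset.replicate (v i) (Fm.neg (Sum.inr i)))

/-- The theory `T(A)` associated with an ordinary ABVASS `A`: the axiom
`q⊥, q₁ ⊗ e_i` for each rule `q →^{+e_i} q₁`; the axiom `q⊥, e_i⊥, q₁`
for each rule `q →^{-e_i} q₁`; the axiom `q⊥, q₁ ⊕ q₂` for each fork
`q → q₁ ∧ q₂`; and the axiom `q⊥, q₁ ⅋ q₂` for each split `q → q₁ + q₂`. -/
def thAx {Q : Type} {d : ℕ} (A : ABVASS Q (Fin d)) :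
    Set (LAxiom (Q ⊕ Fin d)) :=
  {t | (∃ q i q₁, (q, unit i, q₁) ∈ A.Tu ∧
          t = (Fm.tensor (Fm.pos (Sum.inl q₁)) (Fm.pos (Sum.inr i)), [Sum.inl q])) ∨
       (∃ q i q₁, (q, -unit i, q₁) ∈ A.Tu ∧
          t = (Fm.pos (Sum.inl q₁), [Sum.inl q, Sum.inr i])) ∨
       (∃ q q₁ q₂, (q, q₁, q₂) ∈ A.Tf ∧
          t = (Fm.oplus (Fm.pos (Sum.inl q₁)) (Fm.pos (Sum.inl q₂)), [Sum.inl q])) ∨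
       (∃ q q₁ q₂, (q, q₁, q₂) ∈ A.Ts ∧
          t = (Fm.parr (Fm.pos (Sum.inl q₁)) (Fm.pos (Sum.inl q₂)), [Sum.inl q]))}

/-- An ABVASS is ordinary if every unary rule vector is `+e_i` or `-e_i`. -/
def Ordinary {Q : Type} {d : ℕ} (A : ABVASS Q (Fin d)) : Prop :=
  ∀ r ∈ A.Tu, ∃ i, r.2.1 = unit i ∨ r.2.1 = -unit i

namespace PhaseSem

variable {M : Type} [AddCommMonoid M] {α : Type}

def dl (P : Set M) (X : Set M) : Set M := {m | ∀ x ∈ X, m + x ∈ P}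

variable {P : Set M}

lemma mem_dl {m : M} {X : Set M} : m ∈ dl P X ↔ ∀ x ∈ X, m + x ∈ P := Iff.rfl

lemma subset_ddl (X : Set M) : X ⊆ dl P (dl P X) := fun x hx m hm => by
  have := hm x hx; rwa [add_comm] at this

lemma dl_anti {X Y : Set M} (h : X ⊆ Y) : dl P Y ⊆ dl P X := fun m hm x hx => hm x (h hx)

lemma dl_ddl (X : Set M) : dl P (dl P (dl P X)) = dl P X :=
  subset_antisymm (dl_anti (subset_ddl X)) (subset_ddl _)

def pr (X Y : Set M) : Set M := {m | ∃ x ∈ X, ∃ y ∈ Y, m = x + y}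

lemma mem_pr {m : M} {X Y : Set M} : m ∈ pr X Y ↔ ∃ x ∈ X, ∃ y ∈ Y, m = x + y := Iff.rfl

lemma add_mem_pr {X Y : Set M} {x y : M} (hx : x ∈ X) (hy : y ∈ Y) : x + y ∈ pr X Y :=
  ⟨x, hx, y, hy, rfl⟩

lemma pr_mono {X Y X' Y' : Set M} (h1 : X ⊆ X') (h2 : Y ⊆ Y') : pr X Y ⊆ pr X' Y' := by
  rintro m ⟨x, hx, y, hy, rfl⟩; exact ⟨x, h1 hx, y, h2 hy, rfl⟩

lemma pr_comm (X Y : Set M) : pr X Y = pr Y X := by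
  ext m; constructor <;> rintro ⟨x, hx, y, hy, rfl⟩ <;> exact ⟨y, hy, x, hx, (add_comm _ _)⟩

lemma pr_left_comm (X Y Z : Set M) : pr X (pr Y Z) = pr Y (pr X Z) := by
  ext m; constructor <;> rintro ⟨x, hx, y, ⟨a, ha, b, hb, rfl⟩, rfl⟩
  · exact ⟨a, ha, x + b, ⟨x, hx, b, hb, rfl⟩, by rw [add_left_comm]⟩
  · exact ⟨a, ha, x + b, ⟨x, hx, b, hb, rfl⟩, by rw [add_left_comm]⟩

lemma pr_assoc (X Y Z : Set M) : pr (pr X Y) Z = pr X (pr Y Z) := by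
  ext m; constructor
  · rintro ⟨x, ⟨a, ha, b, hb, rfl⟩, y, hy, rfl⟩
    exact ⟨a, ha, b + y, ⟨b, hb, y, hy, rfl⟩, by rw [add_assoc]⟩
  · rintro ⟨x, hx, y, ⟨a, ha, b, hb, rfl⟩, rfl⟩
    exact ⟨x + a, ⟨x, hx, a, ha, rfl⟩, b, hb, by rw [add_assoc]⟩

lemma pr_zero (X : Set M) : pr ({0} : Set M) X = X := by
  ext m; simp [pr]

lemma pr_zero' (X : Set M) : pr X ({0} : Set M) = X := by
  rw [pr_comm, pr_zero]

/-- key lemma: the dual of a product only depends on biorthogonal closures. -/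
lemma dl_pr_ddl (X Y : Set M) :
    dl P (pr (dl P (dl P X)) (dl P (dl P Y))) = dl P (pr X Y) := by
  apply subset_antisymm
  · exact dl_anti (pr_mono (subset_ddl X) (subset_ddl Y))
  · intro m hm
    rintro z ⟨x, hx, y, hy, rfl⟩
    -- m + (x + y) ∈ P with x ∈ ddl X, y ∈ ddl Y
    have h1 : ∀ a ∈ X, m + a ∈ dl P (dl P (dl P Y)) := by
      intro a ha
      rw [dl_ddl]
      intro b hb
      have := hm (a + b) ⟨a, ha, b, hb, rfl⟩
      rwa [← add_assoc] at this
    have h2 : m + y ∈ dl P (dl P (dl P X)) := by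
      rw [dl_ddl]
      intro a ha
      have := h1 a ha y hy
      rw [add_assoc, add_comm a y, ← add_assoc] at this
      exact this
    have := h2 x hx
    rwa [add_assoc, add_comm y x] at this

lemma pr_ddl_subset (X Y : Set M) :
    pr (dl P (dl P X)) (dl P (dl P Y)) ⊆ dl P (dl P (pr X Y)) := by
  have h := subset_ddl (P := P) (pr (dl P (dl P X)) (dl P (dl P Y)))
  rw [dl_pr_ddl] at h
  exact h

lemma dl_union (X Y : Set M) : dl P (X ∪ Y) = dl P X ∩ dl P Y := by
  ext m
  simp only [dl, Set.mem_union, Set.mem_inter_iff, Set.mem_setOf_eq]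
  constructor
  · intro h; exact ⟨fun x hx => h x (Or.inl hx), fun x hx => h x (Or.inr hx)⟩
  · rintro ⟨h1, h2⟩ x (hx | hx); exact h1 x hx; exact h2 x hx

def idm (P : Set M) : Set M := {m | m + m = m ∧ m ∈ dl P (dl P ({0} : Set M))}

lemma zero_mem_idm : (0 : M) ∈ idm P := ⟨by simp, subset_ddl _ rfl⟩

lemma add_mem_idm {a b : M} (ha : a ∈ idm P) (hb : b ∈ idm P) : a + b ∈ idm P := by
  refine ⟨?_, ?_⟩
  · have : a + b + (a + b) = (a + a) + (b + b) := by
      rw [add_assoc, add_left_comm b a b, ← add_assoc]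
    rw [this, ha.1, hb.1]
  · intro x hx
    have hbx : b + x ∈ P := hb.2 x hx
    have : b + x ∈ dl P ({0} : Set M) := by
      intro z hz; simp at hz; subst hz; simpa using hbx
    have := ha.2 (b + x) this
    rwa [← add_assoc] at this

end PhaseSem
namespace PhaseSem

variable {M : Type} [AddCommMonoid M] {α : Type}

def ip (P : Set M) (val : α → Set M) : Fm α → Set M
  | .pos a => dl P (dl P (val a))
  | .neg a => dl P (val a)
  | .parr f g => dl P (pr (dl P (ip P val f)) (dl P (ip P val g)))
  | .tensor f g => dl P (dl P (pr (ip P val f) (ip P val g)))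
  | .bot => dl P {0}
  | .one => dl P (dl P {0})
  | .wth f g => ip P val f ∩ ip P val g
  | .oplus f g => dl P (dl P (ip P val f ∪ ip P val g))
  | .top => Set.univ
  | .zero => dl P Set.univ
  | .bang f => dl P (dl P (ip P val f ∩ idm P))
  | .quest f => dl P (dl P (ip P val f) ∩ idm P)

variable {P : Set M} {val : α → Set M}

lemma ddl_univ : dl P (dl P (Set.univ : Set M)) = Set.univ :=
  subset_antisymm (fun _ _ => trivial) (subset_ddl _)

lemma ip_fact (f : Fm α) : dl P (dl P (ip P val f)) = ip P val f := by
  induction f with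
  | wth f g ihf ihg =>
      apply subset_antisymm
      · intro m hm
        constructor
        · rw [← ihf]
          exact dl_anti (dl_anti (Set.inter_subset_left)) hm
        · rw [← ihg]
          exact dl_anti (dl_anti (Set.inter_subset_right)) hm
      · exact subset_ddl _
  | top => exact ddl_univ
  | _ => first
      | exact dl_ddl _
      | exact dl_ddl _

lemma ip_dual (f : Fm α) : ip P (val := val) f.dual = dl P (ip P val f) := by
  induction f with
  | pos a => exact (dl_ddl _).symm
  | neg a => rfl
  | parr f g ihf ihg =>
      show dl P (dl P (pr (ip P val f.dual) (ip P val g.dual))) = _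
      rw [ihf, ihg]; rfl
  | tensor f g ihf ihg =>
      show dl P (pr (dl P (ip P val f.dual)) (dl P (ip P val g.dual))) = _
      rw [ihf, ihg]
      show dl P (pr (dl P (dl P (ip P val f))) (dl P (dl P (ip P val g)))) = _
      rw [dl_pr_ddl]
      exact (dl_ddl _).symm
  | bot => rfl
  | one => exact (dl_ddl _).symm
  | wth f g ihf ihg =>
      show dl P (dl P (ip P val f.dual ∪ ip P val g.dual)) = dl P (ip P val f ∩ ip P val g)
      rw [ihf, ihg]
      calc dl P (dl P (dl P (ip P val f) ∪ dl P (ip P val g)))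
          = dl P (dl P (dl P (ip P val f)) ∩ dl P (dl P (ip P val g))) := by rw [dl_union]
        _ = dl P (ip P val f ∩ ip P val g) := by rw [ip_fact f, ip_fact g]
  | oplus f g ihf ihg =>
      show ip P val f.dual ∩ ip P val g.dual = _
      rw [ihf, ihg, ← dl_union]
      exact (dl_ddl _).symm
  | top => rfl
  | zero => exact ddl_univ.symm
  | bang f ihf =>
      show dl P (dl P (ip P val f.dual) ∩ idm P) = _
      rw [ihf]
      show dl P (dl P (dl P (ip P val f)) ∩ idm P) = _
      rw [ip_fact f]
      exact (dl_ddl _).symm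
  | quest f ihf =>
      show dl P (dl P (ip P val f.dual ∩ idm P)) = _
      rw [ihf]
      rfl

end PhaseSem
namespace PhaseSem

variable {M : Type} [AddCommMonoid M] {α : Type}

/-- "context denotation": product over the sequent of `k`-values. -/
instance prLC (k : Fm α → Set M) : LeftCommutative (fun f (X : Set M) => pr (k f) X) :=
  ⟨fun _ _ _ => pr_left_comm _ _ _⟩

def Dc (k : Fm α → Set M) (Γ : Multiset (Fm α)) : Set M :=
  Multiset.foldr (fun f X => pr (k f) X) {0} Γ

lemma Dc_zero (k : Fm α → Set M) : Dc k 0 = {0} := rfl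

lemma Dc_cons (k : Fm α → Set M) (f : Fm α) (Γ : Multiset (Fm α)) :
    Dc k (f ::ₘ Γ) = pr (k f) (Dc k Γ) := Multiset.foldr_cons _ _ _ _

lemma Dc_add (k : Fm α → Set M) (Γ Δ : Multiset (Fm α)) :
    Dc k (Γ + Δ) = pr (Dc k Γ) (Dc k Δ) := by
  induction Γ using Multiset.induction with
  | empty => rw [zero_add, Dc_zero, pr_zero]
  | cons f Γ ih => rw [Multiset.cons_add, Dc_cons, Dc_cons, ih, pr_assoc]

lemma Dc_mono {k k' : Fm α → Set M} (h : ∀ f, k f ⊆ k' f) (Γ : Multiset (Fm α)) :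
    Dc k Γ ⊆ Dc k' Γ := by
  induction Γ using Multiset.induction with
  | empty => exact le_rfl
  | cons f Γ ih => rw [Dc_cons, Dc_cons]; exact pr_mono (h f) ih

variable (P : Set M) (val : α → Set M)

/-- Validity of a sequent. -/
def Vd (Γ : Multiset (Fm α)) : Prop :=
  Dc (fun f => dl P (ip P val f)) Γ ⊆ P

variable {P val}

lemma vd_cons_iff (f : Fm α) (Γ : Multiset (Fm α)) :
    Vd P val (f ::ₘ Γ) ↔ Dc (fun g => dl P (ip P val g)) Γ ⊆ ip P val f := by
  rw [Vd, Dc_cons]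
  constructor
  · intro h x hx
    rw [← ip_fact f]
    intro a ha
    have := h (add_mem_pr ha hx)
    rwa [add_comm]
  · rintro h m ⟨a, ha, x, hx, rfl⟩
    exact ha x (h hx)

lemma mem_ip_of_Dc {Γ : Multiset (Fm α)} {f : Fm α} {x : M}
    (h : Vd P val (f ::ₘ Γ)) (hx : x ∈ Dc (fun g => dl P (ip P val g)) Γ) :
    x ∈ ip P val f := (vd_cons_iff f Γ).1 h hx

theorem soundness {T : Set (LAxiom α)} (hax : ∀ t ∈ T, Vd P val (axSeq t)) :
    ∀ {Γ : Multiset (Fm α)}, LLT T Γ → Vd P val Γ := by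
  intro Γ hΓ
  induction hΓ with
  | init f =>
      show Vd P val (f ::ₘ {f.dual})
      rw [vd_cons_iff]
      intro x hx
      rw [show ({f.dual} : Multiset (Fm α)) = f.dual ::ₘ 0 from rfl, Dc_cons, Dc_zero,
        pr_zero'] at hx
      rw [ip_dual] at hx
      rw [← ip_fact f]
      exact hx
  | cut f h1 h2 ih1 ih2 =>
      rw [Vd, Dc_add]
      rintro m ⟨x, hx, y, hy, rfl⟩
      have hxf : x ∈ ip P val f := mem_ip_of_Dc ih1 hx
      have hyf : y ∈ ip P val f.dual := mem_ip_of_Dc ih2 hy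
      rw [ip_dual] at hyf
      have := hyf x hxf
      rwa [add_comm] at this
  | parr f g h ih =>
      rw [vd_cons_iff]
      intro x hx
      rintro w ⟨a, ha, b, hb, rfl⟩
      rw [Vd, Dc_cons, Dc_cons] at ih
      have := ih (add_mem_pr ha (add_mem_pr hb hx))
      rw [← add_assoc] at this
      rwa [add_comm] at this
  | tensor f g h1 h2 ih1 ih2 =>
      rw [vd_cons_iff, Dc_add]
      rintro m ⟨x, hx, y, hy, rfl⟩
      have hxf := mem_ip_of_Dc ih1 hx
      have hyg := mem_ip_of_Dc ih2 hy
      exact subset_ddl _ (add_mem_pr hxf hyg)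
  | bot h ih =>
      rw [vd_cons_iff]
      intro x hx
      intro z hz
      simp only [Set.mem_singleton_iff] at hz
      subst hz
      simpa using ih hx
  | one =>
      show Vd P val (Fm.one ::ₘ 0)
      rw [vd_cons_iff, Dc_zero]
      intro x hx
      simp only [Set.mem_singleton_iff] at hx
      subst hx
      exact subset_ddl _ rfl
  | wth f g h1 h2 ih1 ih2 =>
      rw [vd_cons_iff]
      intro x hx
      exact ⟨mem_ip_of_Dc ih1 hx, mem_ip_of_Dc ih2 hx⟩
  | oplus₁ f g h ih =>
      rw [vd_cons_iff]
      intro x hx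
      exact subset_ddl _ (Or.inl (mem_ip_of_Dc ih hx))
  | oplus₂ f g h ih =>
      rw [vd_cons_iff]
      intro x hx
      exact subset_ddl _ (Or.inr (mem_ip_of_Dc ih hx))
  | top Γ =>
      rw [vd_cons_iff]
      exact fun x _ => trivial
  | qD f h ih =>
      rw [vd_cons_iff]
      intro x hx
      rintro a ⟨ha, _⟩
      have := ha x (mem_ip_of_Dc ih hx)
      rwa [add_comm] at this
  | qW f h ih =>
      rw [vd_cons_iff]
      intro x hx
      rintro a ⟨-, -, ha⟩
      have hx0 : x ∈ dl P ({0} : Set M) := by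
        intro z hz; simp only [Set.mem_singleton_iff] at hz; subst hz
        simpa using ih hx
      have := ha x hx0
      rwa [add_comm] at this
  | qC f h ih =>
      rw [vd_cons_iff]
      intro x hx
      rintro a ⟨ha, hai⟩
      have haq : a ∈ dl P (ip P val (.quest f)) := by
        show a ∈ dl P (dl P (dl P (ip P val f) ∩ idm P))
        exact subset_ddl _ ⟨ha, hai⟩
      rw [Vd, Dc_cons, Dc_cons] at ih
      have := ih (add_mem_pr haq (add_mem_pr haq hx))
      rw [← add_assoc, hai.1] at this
      rwa [add_comm] at this
  | @qP Γ' f hq h ih =>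
      rw [vd_cons_iff]
      -- Dc Γ' ⊆ ddl (DcI Γ') with DcI ⊆ idm ∩ Dc
      have key : ∀ (Δ : Multiset (Fm α)), (∀ g ∈ Δ, ∃ h, g = Fm.quest h) →
          Dc (fun g => dl P (ip P val g)) Δ ⊆
            dl P (dl P (Dc (fun g => dl P (ip P val g) ∩ idm P) Δ)) ∧
          Dc (fun g => dl P (ip P val g) ∩ idm P) Δ ⊆ idm P := by
        intro Δ
        induction Δ using Multiset.induction with
        | empty =>
            intro _
            constructor
            · rw [Dc_zero, Dc_zero]; exact subset_ddl _
            · rw [Dc_zero]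
              intro x hx; simp only [Set.mem_singleton_iff] at hx; subst hx
              exact zero_mem_idm
        | cons g Δ ihΔ =>
            intro hall
            obtain ⟨ih1, ih2⟩ := ihΔ (fun g' hg' => hall g' (Multiset.mem_cons_of_mem hg'))
            obtain ⟨hg, rfl⟩ := hall g (Multiset.mem_cons_self g Δ)
            constructor
            · rw [Dc_cons, Dc_cons]
              have h1 : dl P (ip P val (Fm.quest hg)) ⊆
                  dl P (dl P (dl P (ip P val (Fm.quest hg)) ∩ idm P)) := by
                have hS : dl P (ip P val hg) ∩ idm P ⊆
                    dl P (ip P val (Fm.quest hg)) ∩ idm P := by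
                  intro m hm
                  exact ⟨subset_ddl (dl P (ip P val hg) ∩ idm P) hm, hm.2⟩
                show dl P (dl P (dl P (ip P val hg) ∩ idm P)) ⊆ _
                exact dl_anti (dl_anti hS)
              calc pr (dl P (ip P val (Fm.quest hg))) (Dc (fun g => dl P (ip P val g)) Δ)
                  ⊆ pr (dl P (dl P (dl P (ip P val (Fm.quest hg)) ∩ idm P)))
                      (dl P (dl P (Dc (fun g => dl P (ip P val g) ∩ idm P) Δ))) :=
                    pr_mono h1 ih1
                _ ⊆ dl P (dl P (pr (dl P (ip P val (Fm.quest hg)) ∩ idm P)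
                      (Dc (fun g => dl P (ip P val g) ∩ idm P) Δ))) := pr_ddl_subset _ _
            · rw [Dc_cons]
              rintro m ⟨x, hx, y, hy, rfl⟩
              exact add_mem_idm hx.2 (ih2 hy)
      obtain ⟨k1, k2⟩ := key Γ' hq
      intro x hx
      have hx' := k1 hx
      rw [← ip_fact (Fm.bang f)]
      show x ∈ dl P (dl P (dl P (dl P (ip P val f ∩ idm P))))
      rw [dl_ddl]
      -- suffices: DcI Γ' ⊆ ip f ∩ idm
      have hsub : Dc (fun g => dl P (ip P val g) ∩ idm P) Γ' ⊆ ip P val f ∩ idm P := by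
        intro s hs
        have hsd : s ∈ Dc (fun g => dl P (ip P val g)) Γ' :=
          Dc_mono (fun g => Set.inter_subset_left) Γ' hs
        exact ⟨mem_ip_of_Dc ih hsd, k2 hs⟩
      intro w hw
      have : w ∈ dl P (Dc (fun g => dl P (ip P val g) ∩ idm P) Γ') :=
        dl_anti hsub hw
      have := hx' w (by
        show w ∈ dl P (Dc (fun g => dl P (ip P val g) ∩ idm P) Γ')
        exact this)
      exact this
  | ax ht => exact hax _ ht
  | @dcut Δ t ht h ih =>
      rw [Vd, Dc_add]
      rintro m ⟨x, hx, y, hy, rfl⟩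
      have hxt : x ∈ ip P val t.1 := by
        have := hax t ht
        rw [axSeq] at this
        exact mem_ip_of_Dc this hx
      have hyt : y ∈ ip P val t.1.dual := mem_ip_of_Dc ih hy
      rw [ip_dual] at hyt
      have := hyt x hxt
      rwa [add_comm] at this

end PhaseSem
namespace AbvassLL

open PhaseSem

variable {Q : Type} {d : ℕ}

abbrev Mdl (Q : Type) (d : ℕ) := Multiset Q × (Fin d → ℕ)

/-- `e_i` over the naturals. -/
def unitN {d : ℕ} (i : Fin d) : Fin d → ℕ := fun j => if j = i then 1 else 0

variable (A : ABVASS Q (Fin d)) (Qℓ : Finset Q)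

/-- The root judgement. -/
def RJ (q : Q) (v : Fin d → ℕ) : Prop :=
  ∃ D : DTree Q (Fin d), IsDeduction A D ∧ D.root = (q, v) ∧
    ∀ l ∈ D.leaves, l.1 ∈ Qℓ ∧ l.2 = (fun _ => 0)

/-- The pole of the phase space. -/
def Pol : Set (Mdl Q d) := {m | ∃ q v, m = ({q}, v) ∧ RJ A Qℓ q v}

/-- The valuation of atoms. -/
def vl : Q ⊕ Fin d → Set (Mdl Q d)
  | Sum.inl q => {(({q} : Multiset Q), (0 : Fin d → ℕ))}
  | Sum.inr i => {((0 : Multiset Q), unitN i)}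

lemma mem_Pol {m : Mdl Q d} {q' : Q} {u : Fin d → ℕ} :
    m + (({q'} : Multiset Q), u) ∈ Pol A Qℓ ↔ m.1 = 0 ∧ RJ A Qℓ q' (m.2 + u) := by
  constructor
  · rintro ⟨q, v, heq, hrj⟩
    have h1 : m.1 + {q'} = {q} := congrArg Prod.fst heq
    have h2 : m.2 + u = v := congrArg Prod.snd heq
    have hm1 : m.1 = 0 := by
      have hc := congrArg Multiset.card h1
      simpa using hc
    rw [hm1, zero_add] at h1
    rw [Multiset.singleton_inj] at h1
    subst h1
    exact ⟨hm1, h2 ▸ hrj⟩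
  · rintro ⟨h1, h2⟩
    refine ⟨q', m.2 + u, ?_, h2⟩
    have : m + (({q'} : Multiset Q), u) = (m.1 + {q'}, m.2 + u) := rfl
    rw [this, h1, zero_add]

lemma pol_leaf {ql : Q} (hql : ql ∈ Qℓ) : (({ql} : Multiset Q), (0 : Fin d → ℕ)) ∈ Pol A Qℓ := by
  refine ⟨ql, 0, rfl, DTree.leaf (ql, 0), ValidTree.leaf _, rfl, ?_⟩
  intro l hl
  simp only [DTree.leaves, List.mem_singleton] at hl
  subst hl
  exact ⟨hql, rfl⟩

lemma cast_unit {i j : Fin d} {w : Fin d → ℕ} :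
    (((w + unitN i) j : ℕ) : ℤ) = (w j : ℤ) + unit i j := by
  simp only [Pi.add_apply, unitN, unit]
  split <;> push_cast <;> ring

lemma pol_inc {q q₁ : Q} {i : Fin d} (hr : (q, unit i, q₁) ∈ A.Tu) {m : Mdl Q d}
    (h : m + (({q₁} : Multiset Q), unitN i) ∈ Pol A Qℓ) :
    m + (({q} : Multiset Q), (0 : Fin d → ℕ)) ∈ Pol A Qℓ := by
  rw [mem_Pol] at h ⊢
  obtain ⟨h1, D, hD, hroot, hlv⟩ := h
  refine ⟨h1, DTree.node1 (q, m.2 + 0) D, ?_, rfl, hlv⟩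
  refine ValidTree.one (Or.inl ?_) hD
  refine ⟨unit i, ?_, ?_⟩
  · rw [hroot]; exact hr
  · intro j
    rw [hroot]
    show (((m.2 + unitN i) j : ℕ) : ℤ) = ((m.2 + 0) j : ℤ) + unit i j
    rw [add_zero]
    exact cast_unit

lemma pol_dec {q q₁ : Q} {i : Fin d} (hr : (q, -unit i, q₁) ∈ A.Tu) {m : Mdl Q d}
    (h : m + (({q₁} : Multiset Q), (0 : Fin d → ℕ)) ∈ Pol A Qℓ) :
    m + (({q} : Multiset Q), unitN i) ∈ Pol A Qℓ := by
  rw [mem_Pol] at h ⊢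
  obtain ⟨h1, D, hD, hroot, hlv⟩ := h
  refine ⟨h1, DTree.node1 (q, m.2 + unitN i) D, ?_, rfl, hlv⟩
  refine ValidTree.one (Or.inl ?_) hD
  refine ⟨-unit i, ?_, ?_⟩
  · rw [hroot]; exact hr
  · intro j
    rw [hroot]
    show (((m.2 + 0) j : ℕ) : ℤ) = ((m.2 + unitN i) j : ℤ) + (-unit i) j
    rw [add_zero]
    have := cast_unit (i := i) (j := j) (w := m.2)
    simp only [Pi.neg_apply]
    omega

lemma pol_fork {q q₁ q₂ : Q} (hr : (q, q₁, q₂) ∈ A.Tf) {m : Mdl Q d}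
    (h1 : m + (({q₁} : Multiset Q), (0 : Fin d → ℕ)) ∈ Pol A Qℓ)
    (h2 : m + (({q₂} : Multiset Q), (0 : Fin d → ℕ)) ∈ Pol A Qℓ) :
    m + (({q} : Multiset Q), (0 : Fin d → ℕ)) ∈ Pol A Qℓ := by
  rw [mem_Pol] at h1 h2 ⊢
  obtain ⟨hm1, D1, hD1, hroot1, hlv1⟩ := h1
  obtain ⟨-, D2, hD2, hroot2, hlv2⟩ := h2
  refine ⟨hm1, DTree.node2 (q, m.2 + 0) D1 D2, ?_, rfl, ?_⟩
  · refine ValidTree.two (Or.inl ?_) hD1 hD2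
    rw [hroot1, hroot2]
    exact ⟨hr, rfl, rfl⟩
  · intro l hl
    simp only [DTree.leaves, List.mem_append] at hl
    rcases hl with hl | hl
    exacts [hlv1 l hl, hlv2 l hl]

lemma pol_split {q q₁ q₂ : Q} (hr : (q, q₁, q₂) ∈ A.Ts) {m₁ m₂ : Mdl Q d}
    (h1 : m₁ + (({q₁} : Multiset Q), (0 : Fin d → ℕ)) ∈ Pol A Qℓ)
    (h2 : m₂ + (({q₂} : Multiset Q), (0 : Fin d → ℕ)) ∈ Pol A Qℓ) :
    m₁ + m₂ + (({q} : Multiset Q), (0 : Fin d → ℕ)) ∈ Pol A Qℓ := by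
  rw [mem_Pol] at h1 h2 ⊢
  obtain ⟨hm1, D1, hD1, hroot1, hlv1⟩ := h1
  obtain ⟨hm2, D2, hD2, hroot2, hlv2⟩ := h2
  constructor
  · show m₁.1 + m₂.1 = 0
    rw [hm1, hm2, add_zero]
  refine ⟨DTree.node2 (q, (m₁ + m₂).2 + 0) D1 D2, ?_, rfl, ?_⟩
  · refine ValidTree.two (Or.inr ?_) hD1 hD2
    rw [hroot1, hroot2]
    refine ⟨hr, ?_⟩
    show (m₁.2 + m₂.2) + 0 = (m₁.2 + 0) + (m₂.2 + 0)
    simp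
  · intro l hl
    simp only [DTree.leaves, List.mem_append] at hl
    rcases hl with hl | hl
    exacts [hlv1 l hl, hlv2 l hl]

/-- Singleton products. -/
lemma pr_singleton {M : Type} [AddCommMonoid M] (x y : M) :
    pr ({x} : Set M) ({y} : Set M) = {x + y} := by
  ext m
  simp only [pr, Set.mem_singleton_iff, Set.mem_setOf_eq]
  constructor
  · rintro ⟨a, rfl, b, rfl, rfl⟩; rfl
  · rintro rfl; exact ⟨x, rfl, y, rfl, rfl⟩

lemma Dc_singleton {M α : Type} [AddCommMonoid M] (k : Fm α → Set M) (f : Fm α) :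
    Dc k ({f} : Multiset (Fm α)) = k f := by
  show Dc k (f ::ₘ 0) = k f
  rw [Dc_cons, Dc_zero, pr_zero']

/-- Validity of all axioms of `T(A)` in the model. -/
lemma thAx_valid : ∀ t ∈ thAx A, Vd (Pol A Qℓ) (vl (Q := Q) (d := d)) (axSeq t) := by
  intro t ht
  set P := Pol A Qℓ
  set vv := vl (Q := Q) (d := d) with hvv
  rcases ht with ⟨q, i, q₁, hr, rfl⟩ | ⟨q, i, q₁, hr, rfl⟩ | ⟨q, q₁, q₂, hr, rfl⟩ |
    ⟨q, q₁, q₂, hr, rfl⟩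
  · -- increment
    show Vd P vv (_ ::ₘ _)
    rw [vd_cons_iff]
    have hmap : ((List.map Fm.neg [Sum.inl q] : List (Fm (Q ⊕ Fin d))) :
          Multiset (Fm (Q ⊕ Fin d)))
        = ({Fm.neg (Sum.inl q)} : Multiset (Fm (Q ⊕ Fin d))) := by simp
    rw [hmap, Dc_singleton]
    show dl P (ip P vv (Fm.neg (Sum.inl q))) ⊆ _
    show dl P (dl P (vv (Sum.inl q))) ⊆ dl P (dl P (pr (ip P vv _) (ip P vv _)))
    have hinner : dl P (pr (ip P vv (Fm.pos (Sum.inl q₁))) (ip P vv (Fm.pos (Sum.inr i))))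
        = dl P (pr (vv (Sum.inl q₁)) (vv (Sum.inr i))) := dl_pr_ddl _ _
    rw [hinner]
    apply dl_anti
    rw [show vv (Sum.inl q₁) = {(({q₁} : Multiset Q), (0 : Fin d → ℕ))} from rfl,
      show vv (Sum.inr i) = {((0 : Multiset Q), unitN i)} from rfl,
      pr_singleton,
      show ((({q₁} : Multiset Q), (0 : Fin d → ℕ)) + ((0 : Multiset Q), unitN i))
        = (({q₁} : Multiset Q), unitN i) by simp [Prod.ext_iff]]
    intro m hm z hz
    rw [show vv (Sum.inl q) = {(({q} : Multiset Q), (0 : Fin d → ℕ))} from rfl] at hz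
    simp only [Set.mem_singleton_iff] at hz
    subst hz
    exact pol_inc A Qℓ hr (hm _ rfl)
  · -- decrement
    show Vd P vv (_ ::ₘ _)
    rw [vd_cons_iff]
    have hmap : ((List.map Fm.neg [Sum.inl q, Sum.inr i] : List (Fm (Q ⊕ Fin d))) : Multiset _)
        = Fm.neg (Sum.inl q) ::ₘ ({Fm.neg (Sum.inr i)} : Multiset _) := rfl
    rw [hmap, Dc_cons, Dc_singleton]
    show pr (dl P (dl P (vv (Sum.inl q)))) (dl P (dl P (vv (Sum.inr i)))) ⊆
      dl P (dl P (vv (Sum.inl q₁)))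
    have h1 := pr_ddl_subset (P := P) (vv (Sum.inl q)) (vv (Sum.inr i))
    refine h1.trans ?_
    rw [show vv (Sum.inl q) = {(({q} : Multiset Q), (0 : Fin d → ℕ))} from rfl,
      show vv (Sum.inr i) = {((0 : Multiset Q), unitN i)} from rfl,
      pr_singleton,
      show ((({q} : Multiset Q), (0 : Fin d → ℕ)) + ((0 : Multiset Q), unitN i))
        = (({q} : Multiset Q), unitN i) by simp [Prod.ext_iff]]
    apply dl_anti
    intro m hm z hz
    simp only [Set.mem_singleton_iff] at hz
    subst hz
    exact pol_dec A Qℓ hr (hm _ rfl)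
  · -- fork
    show Vd P vv (_ ::ₘ _)
    rw [vd_cons_iff]
    have hmap : ((List.map Fm.neg [Sum.inl q] : List (Fm (Q ⊕ Fin d))) :
          Multiset (Fm (Q ⊕ Fin d)))
        = ({Fm.neg (Sum.inl q)} : Multiset (Fm (Q ⊕ Fin d))) := by simp
    rw [hmap, Dc_singleton]
    show dl P (dl P (vv (Sum.inl q))) ⊆
      dl P (dl P (ip P vv (Fm.pos (Sum.inl q₁)) ∪ ip P vv (Fm.pos (Sum.inl q₂))))
    apply dl_anti
    intro m hm z hz
    rw [show vv (Sum.inl q) = {(({q} : Multiset Q), (0 : Fin d → ℕ))} from rfl] at hz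
    simp only [Set.mem_singleton_iff] at hz
    subst hz
    have hm1 : m + (({q₁} : Multiset Q), (0 : Fin d → ℕ)) ∈ P :=
      hm _ (Or.inl (subset_ddl _ rfl))
    have hm2 : m + (({q₂} : Multiset Q), (0 : Fin d → ℕ)) ∈ P :=
      hm _ (Or.inr (subset_ddl _ rfl))
    exact pol_fork A Qℓ hr hm1 hm2
  · -- split
    show Vd P vv (_ ::ₘ _)
    rw [vd_cons_iff]
    have hmap : ((List.map Fm.neg [Sum.inl q] : List (Fm (Q ⊕ Fin d))) :
          Multiset (Fm (Q ⊕ Fin d)))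
        = ({Fm.neg (Sum.inl q)} : Multiset (Fm (Q ⊕ Fin d))) := by simp
    rw [hmap, Dc_singleton]
    show dl P (dl P (vv (Sum.inl q))) ⊆
      dl P (pr (dl P (ip P vv (Fm.pos (Sum.inl q₁)))) (dl P (ip P vv (Fm.pos (Sum.inl q₂)))))
    apply dl_anti
    rintro z ⟨m₁, hm1, m₂, hm2, rfl⟩
    intro w hw
    rw [show vv (Sum.inl q) = {(({q} : Multiset Q), (0 : Fin d → ℕ))} from rfl] at hw
    simp only [Set.mem_singleton_iff] at hw
    subst hw
    have e1 : m₁ + (({q₁} : Multiset Q), (0 : Fin d → ℕ)) ∈ P := by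
      rw [show ip P vv (Fm.pos (Sum.inl q₁)) = dl P (dl P (vv (Sum.inl q₁))) from rfl,
        dl_ddl] at hm1
      exact hm1 _ rfl
    have e2 : m₂ + (({q₂} : Multiset Q), (0 : Fin d → ℕ)) ∈ P := by
      rw [show ip P vv (Fm.pos (Sum.inl q₂)) = dl P (dl P (vv (Sum.inl q₂))) from rfl,
        dl_ddl] at hm2
      exact hm2 _ rfl
    exact pol_split A Qℓ hr e1 e2

end AbvassLL
namespace AbvassLL

open PhaseSem

variable {Q : Type} {d : ℕ}

/-- The multiset of counter atoms of `θ(q, v)`. -/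
def counters (v : Fin d → ℕ) : Multiset (Fm (Q ⊕ Fin d)) :=
  (Finset.univ : Finset (Fin d)).sum
    (fun i => Multiset.replicate (v i) (Fm.neg (Sum.inr i)))

lemma theta_eq (q : Q) (v : Fin d → ℕ) :
    theta q v = Fm.neg (Sum.inl q) ::ₘ counters v := rfl

lemma counters_add (v w : Fin d → ℕ) :
    counters (Q := Q) (v + w) = counters v + counters w := by
  unfold counters
  simp [Pi.add_apply, Multiset.replicate_add, Finset.sum_add_distrib]

lemma counters_unit (i : Fin d) :
    counters (Q := Q) (unitN i) = {Fm.neg (Sum.inr i)} := by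
  unfold counters unitN
  rw [Finset.sum_eq_single i]
  · simp
  · intro j _ hj; simp [hj]
  · intro h; simp at h

lemma counters_zero : counters (Q := Q) (d := d) (fun _ => 0) = 0 := by
  unfold counters; simp

section Backward

variable (A : ABVASS Q (Fin d)) (Qℓ : Finset Q)

lemma rep_mem (n : ℕ) (i : Fin d) :
    (((0 : Multiset Q), fun j => if j = i then n else 0) : Mdl Q d) ∈
      Dc (fun f => dl (Pol A Qℓ) (ip (Pol A Qℓ) vl f))
        (Multiset.replicate n (Fm.neg (Sum.inr i))) := by
  induction n with
  | zero =>
      rw [Multiset.replicate_zero, Dc_zero]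
      have : ((fun j => if j = i then 0 else 0) : Fin d → ℕ) = 0 := by
        funext j; simp
      rw [this]
      rfl
  | succ n ih =>
      rw [Multiset.replicate_succ, Dc_cons]
      refine ⟨((0 : Multiset Q), unitN i), ?_, _, ih, ?_⟩
      · exact subset_ddl _ rfl
      · refine Prod.ext (by simp) ?_
        funext j
        show (if j = i then n + 1 else 0) = unitN i j + (if j = i then n else 0)
        unfold unitN
        by_cases hj : j = i <;> simp [hj] <;> omega

lemma finsum_mem (v : Fin d → ℕ) (s : Finset (Fin d)) :
    (((0 : Multiset Q), fun j => if j ∈ s then v j else 0) : Mdl Q d) ∈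
      Dc (fun f => dl (Pol A Qℓ) (ip (Pol A Qℓ) vl f))
        (s.sum (fun i => Multiset.replicate (v i) (Fm.neg (Sum.inr i)))) := by
  induction s using Finset.induction_on with
  | empty =>
      rw [Finset.sum_empty, Dc_zero]
      have : ((fun j => if j ∈ (∅ : Finset (Fin d)) then v j else 0) : Fin d → ℕ) = 0 := by
        funext j; simp
      rw [this]
      rfl
  | @insert a s ha ih =>
      rw [Finset.sum_insert ha, Dc_add]
      refine ⟨_, rep_mem A Qℓ (v a) a, _, ih, ?_⟩
      refine Prod.ext (by simp) ?_
      funext j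
      show (if j ∈ insert a s then v j else 0)
        = (if j = a then v a else 0) + (if j ∈ s then v j else 0)
      by_cases hj : j = a
      · subst hj; simp [ha]
      · simp [hj, Finset.mem_insert]

lemma ql_mem : ∀ (S : Multiset Q), (∀ x ∈ S, x ∈ Qℓ) →
    (0 : Mdl Q d) ∈
      Dc (fun f => dl (Pol A Qℓ) (ip (Pol A Qℓ) vl f))
        (S.map (fun ql => Fm.quest (Fm.pos (Sum.inl ql)))) := by
  intro S
  induction S using Multiset.induction with
  | empty => intro _; rw [Multiset.map_zero, Dc_zero]; rfl
  | cons x S ih =>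
      intro hall
      rw [Multiset.map_cons, Dc_cons]
      refine ⟨0, ?_, 0, ih (fun y hy => hall y (Multiset.mem_cons_of_mem hy)), by simp⟩
      show (0 : Mdl Q d) ∈ dl (Pol A Qℓ) (ip (Pol A Qℓ) vl (Fm.quest (Fm.pos (Sum.inl x))))
      show (0 : Mdl Q d) ∈ dl (Pol A Qℓ)
        (dl (Pol A Qℓ) (dl (Pol A Qℓ) (ip (Pol A Qℓ) vl (Fm.pos (Sum.inl x))) ∩ idm (Pol A Qℓ)))
      refine subset_ddl _ ⟨?_, zero_mem_idm⟩
      show (0 : Mdl Q d) ∈ dl (Pol A Qℓ) (dl (Pol A Qℓ) (dl (Pol A Qℓ) (vl (Sum.inl x))))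
      rw [dl_ddl]
      intro z hz
      have : z = ((({x} : Multiset Q), (0 : Fin d → ℕ)) : Mdl Q d) := hz
      subst this
      rw [zero_add]
      exact pol_leaf A Qℓ (hall x (Multiset.mem_cons_self x S))

lemma backward (q : Q) (v : Fin d → ℕ)
    (h : LLT (thAx A)
      (theta q v + Multiset.map (fun ql => Fm.quest (Fm.pos (Sum.inl ql))) Qℓ.val)) :
    RJ A Qℓ q v := by
  have hvd := soundness (thAx_valid A Qℓ) h
  rw [Vd, theta_eq, Multiset.cons_add, Dc_cons, Dc_add] at hvd
  have hq : ((({q} : Multiset Q), (0 : Fin d → ℕ)) : Mdl Q d) ∈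
      dl (Pol A Qℓ) (ip (Pol A Qℓ) vl (Fm.neg (Sum.inl q))) := by
    show _ ∈ dl (Pol A Qℓ) (dl (Pol A Qℓ) (vl (Sum.inl q)))
    exact subset_ddl _ rfl
  have hc : (((0 : Multiset Q), v) : Mdl Q d) ∈
      Dc (fun f => dl (Pol A Qℓ) (ip (Pol A Qℓ) vl f)) (counters v) := by
    have := finsum_mem A Qℓ v Finset.univ
    have he : ((fun j => if j ∈ (Finset.univ : Finset (Fin d)) then v j else 0) : Fin d → ℕ)
        = v := by funext j; simp
    rw [he] at this
    exact this
  have hql := ql_mem A Qℓ Qℓ.val (fun x hx => hx)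
  have hmem := hvd ⟨_, hq, _, ⟨_, hc, _, hql, rfl⟩, rfl⟩
  have heq : ((({q} : Multiset Q), (0 : Fin d → ℕ)) : Mdl Q d) + (((0 : Multiset Q), v) + 0)
      = ((({q} : Multiset Q), v) : Mdl Q d) := by
    refine Prod.ext (by simp) (by simp)
  rw [heq] at hmem
  obtain ⟨q', v', heq', hrj⟩ := hmem
  have h1 : ({q} : Multiset Q) = {q'} := congrArg Prod.fst heq'
  have h2 : v = v' := congrArg Prod.snd heq'
  rw [Multiset.singleton_inj] at h1
  subst h1; subst h2
  exact hrj

end Backward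

section Forward

lemma llt_eq {α : Type} {T : Set (LAxiom α)} {Γ Δ : Multiset (Fm α)}
    (h : LLT T Γ) (e : Γ = Δ) : LLT T Δ := e ▸ h

lemma llt_weak {α : Type} {T : Set (LAxiom α)} {Γ : Multiset (Fm α)} :
    ∀ (S : Multiset (Fm α)), (∀ g ∈ S, ∃ h, g = Fm.quest h) →
      LLT T Γ → LLT T (S + Γ) := by
  intro S
  induction S using Multiset.induction with
  | empty => intro _ h; simpa using h
  | cons f S ih =>
      intro hS h
      obtain ⟨hf, rfl⟩ := hS f (Multiset.mem_cons_self f S)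
      rw [Multiset.cons_add]
      exact LLT.qW hf (ih (fun g hg => hS g (Multiset.mem_cons_of_mem hg)) h)

lemma llt_contr {α : Type} {T : Set (LAxiom α)} :
    ∀ (S : Multiset (Fm α)), (∀ g ∈ S, ∃ h, g = Fm.quest h) →
      ∀ (Γ : Multiset (Fm α)), LLT T (Γ + S + S) → LLT T (Γ + S) := by
  intro S
  induction S using Multiset.induction with
  | empty => intro _ Γ h; simpa using h
  | cons f S ih =>
      intro hS Γ h
      obtain ⟨hf, rfl⟩ := hS f (Multiset.mem_cons_self f S)
      have e1 : Γ + (Fm.quest hf ::ₘ S) + (Fm.quest hf ::ₘ S)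
          = Fm.quest hf ::ₘ Fm.quest hf ::ₘ (Γ + S + S) := by
        simp only [← Multiset.singleton_add]
        ac_rfl
      rw [e1] at h
      have h2 := LLT.qC hf h
      have e2 : Fm.quest hf ::ₘ (Γ + S + S) = (Fm.quest hf ::ₘ Γ) + S + S := by
        simp only [← Multiset.singleton_add]
        ac_rfl
      rw [e2] at h2
      have h3 := ih (fun g hg => hS g (Multiset.mem_cons_of_mem hg)) (Fm.quest hf ::ₘ Γ) h2
      refine llt_eq h3 ?_
      simp only [← Multiset.singleton_add]
      ac_rfl

variable {A : ABVASS Q (Fin d)}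

lemma qlm_quests (Qℓ : Finset Q) :
    ∀ g ∈ Multiset.map (fun ql => Fm.quest (Fm.pos ((Sum.inl ql) : Q ⊕ Fin d))) Qℓ.val,
      ∃ h, g = Fm.quest h := by
  intro g hg
  obtain ⟨ql, _, rfl⟩ := Multiset.mem_map.1 hg
  exact ⟨_, rfl⟩

lemma forward (hz : A.Tz = ∅) (hord : Ordinary A) (Qℓ : Finset Q) :
    ∀ {D : DTree Q (Fin d)}, IsDeduction A D →
      (∀ l ∈ D.leaves, l.1 ∈ Qℓ ∧ l.2 = (fun _ => 0)) →
      LLT (thAx A) (theta D.root.1 D.root.2 +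
        Multiset.map (fun ql => Fm.quest (Fm.pos (Sum.inl ql))) Qℓ.val) := by
  intro D hD
  set QLm := Multiset.map (fun ql => Fm.quest (Fm.pos (Sum.inl ql))) Qℓ.val with hQLm
  induction hD with
  | leaf c =>
      intro hlv
      obtain ⟨hc1, hc2⟩ := hlv c (by simp [DTree.leaves])
      show LLT (thAx A) (theta c.1 c.2 + QLm)
      rw [theta_eq, hc2, counters_zero]
      have hmem : Fm.quest (Fm.pos (Sum.inl c.1)) ∈ QLm :=
        Multiset.mem_map_of_mem _ hc1
      obtain ⟨S, hS⟩ := Multiset.exists_cons_of_mem hmem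
      have hbase : LLT (thAx A)
          (Fm.quest (Fm.pos (Sum.inl c.1)) ::ₘ {Fm.neg (Sum.inl c.1)}) :=
        LLT.qD _ (LLT.init (Fm.pos (Sum.inl c.1)))
      have hw := llt_weak S
        (fun g hg => qlm_quests Qℓ g (by
          rw [← hQLm, hS]; exact Multiset.mem_cons_of_mem hg)) hbase
      refine llt_eq hw ?_
      rw [hS]
      simp only [← Multiset.singleton_add]
      ac_rfl
  | one hstep hDt ih =>
      rename_i c t
      intro hlv
      show LLT (thAx A) (theta c.1 c.2 + QLm)
      have hlv' : ∀ l ∈ t.leaves, l.1 ∈ Qℓ ∧ l.2 = (fun _ => 0) := hlv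
      rcases hstep with ⟨u, hru, hvec⟩ | ⟨hzz, -, -⟩
      swap
      · rw [hz] at hzz; exact absurd hzz (Set.notMem_empty _)
      obtain ⟨i, hui | hui⟩ := hord _ hru
      all_goals simp only at hui; subst hui
      · -- increment
        have hv2 : t.root.2 = c.2 + unitN i := by
          funext j
          have h1 := hvec j
          have h2 : (((c.2 + unitN i) j : ℕ) : ℤ) = (c.2 j : ℤ) + unit i j := cast_unit
          exact_mod_cast h1.trans h2.symm
        have ht : (Fm.tensor (Fm.pos (Sum.inl t.root.1)) (Fm.pos (Sum.inr i)),
            [Sum.inl c.1]) ∈ thAx A := Or.inl ⟨c.1, i, t.root.1, hru, rfl⟩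
        have ih' := ih hlv'
        rw [theta_eq, hv2, counters_add, counters_unit] at ih'
        have ih'' : LLT (thAx A) (Fm.neg (Sum.inl t.root.1) ::ₘ Fm.neg (Sum.inr i) ::ₘ
            (counters c.2 + QLm)) := by
          refine llt_eq ih' ?_
          simp only [← Multiset.singleton_add]
          ac_rfl
        have hp := LLT.parr _ _ ih''
        have hd := LLT.dcut ht hp
        simp only [List.map_cons, List.map_nil, Multiset.coe_singleton,
          Multiset.singleton_add] at hd
        refine llt_eq hd ?_
        rw [theta_eq]
        simp only [← Multiset.singleton_add]
        ac_rfl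
      · -- decrement
        have hv2 : c.2 = t.root.2 + unitN i := by
          funext j
          have h1 := hvec j
          have h2 : (((t.root.2 + unitN i) j : ℕ) : ℤ) = (t.root.2 j : ℤ) + unit i j :=
            cast_unit
          simp only [Pi.neg_apply] at h1
          have : ((c.2 j : ℕ) : ℤ) = (((t.root.2 + unitN i) j : ℕ) : ℤ) := by omega
          exact_mod_cast this
        have ht : (Fm.pos (Sum.inl t.root.1), [Sum.inl c.1, Sum.inr i]) ∈ thAx A :=
          Or.inr (Or.inl ⟨c.1, i, t.root.1, hru, rfl⟩)
        have ih' := ih hlv'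
        rw [theta_eq] at ih'
        have ih'' : LLT (thAx A) ((Fm.pos (Sum.inl t.root.1)).dual ::ₘ
            (counters t.root.2 + QLm)) := by
          refine llt_eq ih' ?_
          simp only [Fm.dual, ← Multiset.singleton_add]
          ac_rfl
        have hd := LLT.dcut ht ih''
        simp only [List.map_cons, List.map_nil] at hd
        have hd' : LLT (thAx A)
            ((Fm.neg (Sum.inl c.1) ::ₘ {Fm.neg (Sum.inr i)}) +
              (counters t.root.2 + QLm)) := hd
        refine llt_eq hd' ?_
        rw [theta_eq, hv2, counters_add, counters_unit]
        simp only [← Multiset.singleton_add]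
        ac_rfl
  | two hstep hD1 hD2 ih1 ih2 =>
      rename_i c t₁ t₂
      intro hlv
      show LLT (thAx A) (theta c.1 c.2 + QLm)
      have hlv1 : ∀ l ∈ t₁.leaves, l.1 ∈ Qℓ ∧ l.2 = (fun _ => 0) := fun l hl =>
        hlv l (by simp only [DTree.leaves, List.mem_append]; exact Or.inl hl)
      have hlv2 : ∀ l ∈ t₂.leaves, l.1 ∈ Qℓ ∧ l.2 = (fun _ => 0) := fun l hl =>
        hlv l (by simp only [DTree.leaves, List.mem_append]; exact Or.inr hl)
      rcases hstep with ⟨hf, he1, he2⟩ | ⟨hs, hv⟩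
      · -- fork
        have ht : (Fm.oplus (Fm.pos (Sum.inl t₁.root.1)) (Fm.pos (Sum.inl t₂.root.1)),
            [Sum.inl c.1]) ∈ thAx A := Or.inr (Or.inr (Or.inl ⟨c.1, _, _, hf, rfl⟩))
        have i1 := ih1 hlv1
        have i2 := ih2 hlv2
        rw [theta_eq, he1] at i1
        rw [theta_eq, he2] at i2
        have i1' : LLT (thAx A) (Fm.neg (Sum.inl t₁.root.1) ::ₘ (counters c.2 + QLm)) := by
          refine llt_eq i1 ?_
          simp only [← Multiset.singleton_add]; ac_rfl
        have i2' : LLT (thAx A) (Fm.neg (Sum.inl t₂.root.1) ::ₘ (counters c.2 + QLm)) := by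
          refine llt_eq i2 ?_
          simp only [← Multiset.singleton_add]; ac_rfl
        have hw := LLT.wth _ _ i1' i2'
        have hd := LLT.dcut ht hw
        simp only [List.map_cons, List.map_nil, Multiset.coe_singleton,
          Multiset.singleton_add] at hd
        refine llt_eq hd ?_
        rw [theta_eq]
        simp only [← Multiset.singleton_add]
        ac_rfl
      · -- split
        have ht : (Fm.parr (Fm.pos (Sum.inl t₁.root.1)) (Fm.pos (Sum.inl t₂.root.1)),
            [Sum.inl c.1]) ∈ thAx A := Or.inr (Or.inr (Or.inr ⟨c.1, _, _, hs, rfl⟩))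
        have i1 := ih1 hlv1
        have i2 := ih2 hlv2
        rw [theta_eq] at i1 i2
        have i1' : LLT (thAx A)
            (Fm.neg (Sum.inl t₁.root.1) ::ₘ (counters t₁.root.2 + QLm)) := by
          refine llt_eq i1 ?_
          simp only [← Multiset.singleton_add]; ac_rfl
        have i2' : LLT (thAx A)
            (Fm.neg (Sum.inl t₂.root.1) ::ₘ (counters t₂.root.2 + QLm)) := by
          refine llt_eq i2 ?_
          simp only [← Multiset.singleton_add]; ac_rfl
        have htens := LLT.tensor _ _ i1' i2'
        have htens' : LLT (thAx A)
            ((Fm.tensor (Fm.neg (Sum.inl t₁.root.1)) (Fm.neg (Sum.inl t₂.root.1)) ::ₘ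
              (counters t₁.root.2 + counters t₂.root.2)) + QLm + QLm) := by
          refine llt_eq htens ?_
          simp only [← Multiset.singleton_add]; ac_rfl
        have hcon := llt_contr QLm (qlm_quests Qℓ) _ htens'
        have hcon' : LLT (thAx A)
            (Fm.tensor (Fm.neg (Sum.inl t₁.root.1)) (Fm.neg (Sum.inl t₂.root.1)) ::ₘ
              (counters c.2 + QLm)) := by
          refine llt_eq hcon ?_
          rw [hv, counters_add]
          simp only [← Multiset.singleton_add]; ac_rfl
        have hd := LLT.dcut ht hcon'
        simp only [List.map_cons, List.map_nil, Multiset.coe_singleton,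
          Multiset.singleton_add] at hd
        refine llt_eq hd ?_
        rw [theta_eq]
        simp only [← Multiset.singleton_add]
        ac_rfl

end Forward

end AbvassLL

/-- For an ordinary ABVASS `A` (no full zero tests) and all configurations
`(q, v)`, the root judgement `A, Q_ℓ ▷ q, v` holds iff the sequent
`⊢ θ(q, v), ?Q_ℓ` is provable in LL+T(A). -/
theorem abvass_reach_iff_llt {Q : Type} [Fintype Q] {d : ℕ}
    (A : ABVASS Q (Fin d)) (hz : A.Tz = ∅) (hord : Ordinary A)
    (Qℓ : Finset Q) (q : Q) (v : Fin d → ℕ) :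
    (∃ D : DTree Q (Fin d), IsDeduction A D ∧ D.root = (q, v) ∧
        ∀ l ∈ D.leaves, l.1 ∈ Qℓ ∧ l.2 = (fun _ => 0)) ↔
    LLT (thAx A)
      (theta q v +
        Multiset.map (fun ql => Fm.quest (Fm.pos (Sum.inl ql))) Qℓ.val) := by
  constructor
  · rintro ⟨D, hD, hroot, hlv⟩
    have := AbvassLL.forward hz hord Qℓ hD hlv
    rw [hroot] at this
    exact this
  · intro h
    exact AbvassLL.backward A Qℓ q v h
end
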